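/- arXiv:2001.01875 — 2 statements merged into one kernel-verified Lean document; each statement's English description precedes it below -/
import Mathlib

section
/- Let P be a graded poset of rank n with 0̂. Then P is near-Eulerian if and only if the semisuspension Σ̃P is the boundary of an Eulerian poset, i.e. if and only if the poset Σ̃P ∪ {1̂} obtained by adjoining a maximal element to Σ̃P is Eulerian. -/
open scoped Classical

noncomputable section

namespace CDIndex

variable {α β : Type}

/-- The natural rank function of a graded poset: `rho x` is one less than the largest
cardinality of a chain contained in `Set.Iic x` (i.e. the length of a maximal chain of
the interval `[0̂, x]`). -/
def rho [PartialOrder α] (x : α) : ℕ :=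
  sSup {k : ℕ | ∃ s : Finset α,
    IsChain (· ≤ ·) (s : Set α) ∧ (s : Set α) ⊆ Set.Iic x ∧ s.card = k + 1}

/-- A subset `S` of a poset is graded of rank `n` if every maximal chain of `S`
has exactly `n + 1` elements (i.e. length `n`). -/
def IsGradedSetOfRank [PartialOrder α] (S : Set α) (n : ℕ) : Prop :=
  ∀ s : Finset α, (s : Set α) ⊆ S → IsChain (· ≤ ·) (s : Set α) →
    (∀ t : Finset α, (t : Set α) ⊆ S → IsChain (· ≤ ·) (t : Set α) → s ⊆ t → s = t) →
    s.card = n + 1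

/-- A poset is graded of rank `n` if every maximal chain has length `n`. -/
def IsGradedOfRank (α : Type) [PartialOrder α] (n : ℕ) : Prop :=
  IsGradedSetOfRank (Set.univ : Set α) n

/-- Every interval `[s, t]` with `s < t`, `s, t ∈ S`, has equally many elements of even
rank and of odd rank. -/
def BalancedIntervalsIn [PartialOrder α] (S : Set α) : Prop :=
  ∀ s ∈ S, ∀ t ∈ S, s < t →
    {y ∈ Set.Icc s t | Even (rho y)}.ncard = {y ∈ Set.Icc s t | Odd (rho y)}.ncard

/-- An Eulerian poset of rank `n`: a graded poset with `0̂` and `1̂` in which every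
interval of positive length has equally many elements of each parity of rank. -/
def IsEulerianOfRank (α : Type) [PartialOrder α] (n : ℕ) : Prop :=
  (∃ b : α, ∀ z, b ≤ z) ∧ (∃ t : α, ∀ z, z ≤ t) ∧
    IsGradedOfRank α n ∧ BalancedIntervalsIn (Set.univ : Set α)

/-- A lower Eulerian poset of rank `n`: a graded poset with `0̂` all of whose intervals
are Eulerian. -/
def IsLowerEulerianOfRank (α : Type) [PartialOrder α] (n : ℕ) : Prop :=
  (∃ b : α, ∀ z, b ≤ z) ∧ IsGradedOfRank α n ∧ BalancedIntervalsIn (Set.univ : Set α)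

/-- A lower order ideal `S` (of a poset) which is lower Eulerian of rank `n`. -/
def IsLowerEulerianSetOfRank [PartialOrder α] (S : Set α) (n : ℕ) : Prop :=
  IsGradedSetOfRank S n ∧ BalancedIntervalsIn S

/-- The boundary of (a lower order ideal `S` of) a graded poset of rank `n`: the lower
order ideal generated by the rank `n - 1` elements which are covered by exactly one
element. -/
def boundaryIn [PartialOrder α] (S : Set α) (n : ℕ) : Set α :=
  {y | y ∈ S ∧ ∃ x ∈ S, rho x = n - 1 ∧ {z ∈ S | x ⋖ z}.ncard = 1 ∧ y ≤ x}

/-- The boundary `∂P` of a graded poset of rank `n`. -/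
def boundary (α : Type) [PartialOrder α] (n : ℕ) : Set α :=
  boundaryIn (Set.univ : Set α) n

/-- `α` is a near-Eulerian poset of rank `n`: it is obtained from an Eulerian poset `Q`
of rank `n + 1` by removing the maximal element and one element `q` of rank `n`. -/
def IsNearEulerianOfRank (α : Type) [PartialOrder α] [Finite α] (n : ℕ) : Prop :=
  ∃ (Q : Type) (_ : PartialOrder Q) (_ : Finite Q) (q top : Q),
    IsEulerianOfRank Q (n + 1) ∧ (∀ z, z ≤ top) ∧ rho q = n ∧ q ≠ top ∧
    Nonempty (α ≃o {x : Q // x ≠ q ∧ x ≠ top})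

/-- `α` is (isomorphic to) the boundary of an Eulerian poset, where `α` has rank `n`
(so the Eulerian poset has rank `n + 1`). -/
def IsBoundaryOfEulerianOfRank (α : Type) [PartialOrder α] [Finite α] (n : ℕ) : Prop :=
  ∃ (Q : Type) (_ : PartialOrder Q) (_ : Finite Q) (top : Q),
    IsEulerianOfRank Q (n + 1) ∧ (∀ z, z ≤ top) ∧
    Nonempty (α ≃o {x : Q // x ≠ top})

/-! ### The semisuspension -/

/-- The semisuspension of `α` relative to a set `S` (intended: `S = ∂α`): the poset `α`
together with one new element `q` lying above `0̂` and above every element of `S`. -/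
@[ext] structure Semisusp (α : Type) (S : Set α) : Type where
  toOpt : Option α

namespace Semisusp

variable {S : Set α}

/-- The new vertex `q` of the semisuspension. -/
def q : Semisusp α S := ⟨none⟩

/-- The inclusion of `α` into its semisuspension. -/
def incl (a : α) : Semisusp α S := ⟨some a⟩

instance instPartialOrder [PartialOrder α] [OrderBot α] : PartialOrder (Semisusp α S) where
  le x y := match x, y with
    | ⟨some a⟩, ⟨some b⟩ => a ≤ b
    | ⟨some a⟩, ⟨none⟩ => a = ⊥ ∨ ∃ s ∈ S, a ≤ s
    | ⟨none⟩, ⟨some _⟩ => False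
    | ⟨none⟩, ⟨none⟩ => True
  le_refl x := by rcases x with ⟨_ | a⟩ <;> simp
  le_trans x y z hxy hyz := by
    rcases x with ⟨_ | a⟩ <;> rcases y with ⟨_ | b⟩ <;> rcases z with ⟨_ | c⟩ <;>
      simp_all
    · rcases hyz with h | ⟨s, hs, hbs⟩
      · subst h
        exact Or.inl (le_bot_iff.mp hxy)
      · exact Or.inr ⟨s, hs, le_trans hxy hbs⟩
    · exact le_trans hxy hyz
  le_antisymm x y hxy hyx := by
    rcases x with ⟨_ | a⟩ <;> rcases y with ⟨_ | b⟩ <;> simp_all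
    exact le_antisymm hxy hyx

instance [PartialOrder α] [OrderBot α] : OrderBot (Semisusp α S) where
  bot := ⟨some ⊥⟩
  bot_le x := by
    rcases x with ⟨_ | a⟩
    · exact Or.inl rfl
    · show (⊥ : α) ≤ a
      exact bot_le

def equivOption : Semisusp α S ≃ Option α where
  toFun := toOpt
  invFun := mk
  left_inv _ := rfl
  right_inv _ := rfl

instance [Finite α] : Finite (Semisusp α S) := by
  have := Fintype.ofFinite α
  exact Finite.of_equiv (Option α) (equivOption (S := S)).symm

end Semisusp

/-! ### Auxiliary lemmas on chains and ranks -/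

section Aux

variable {β γ : Type} [PartialOrder β] [PartialOrder γ]

/-- A maximal chain, as a finset. -/
def MaxChain (t : Finset β) : Prop :=
  IsChain (· ≤ ·) (t : Set β) ∧
    ∀ u : Finset β, IsChain (· ≤ ·) (u : Set β) → t ⊆ u → t = u

lemma exists_maxChain [Finite β] (s : Finset β) (hs : IsChain (· ≤ ·) (s : Set β)) :
    ∃ t, s ⊆ t ∧ MaxChain t := by
  have := Fintype.ofFinite β
  classical
  set C : Finset (Finset β) :=
    Finset.univ.filter (fun t => IsChain (· ≤ ·) (t : Set β) ∧ s ⊆ t) with hC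
  have hsC : s ∈ C := by simp [hC, hs]
  obtain ⟨t, htC, hmax⟩ := C.exists_max_image Finset.card ⟨s, hsC⟩
  simp only [hC, Finset.mem_filter, Finset.mem_univ, true_and] at htC
  refine ⟨t, htC.2, htC.1, fun u hu htu => ?_⟩
  have huC : u ∈ C := by simp [hC, hu, htC.2.trans htu]
  exact Finset.eq_of_subset_of_card_le htu (hmax u huC)

lemma MaxChain.card_eq {n : ℕ} {t : Finset β} (h : IsGradedOfRank β n)
    (ht : MaxChain t) : t.card = n + 1 :=
  h t (Set.subset_univ _) ht.1 (fun u _ hu htu => ht.2 u hu htu)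

lemma chain_card_le [Finite β] {n : ℕ} (h : IsGradedOfRank β n) {s : Finset β}
    (hs : IsChain (· ≤ ·) (s : Set β)) : s.card ≤ n + 1 := by
  obtain ⟨t, hst, ht⟩ := exists_maxChain s hs
  calc s.card ≤ t.card := Finset.card_le_card hst
  _ = n + 1 := ht.card_eq h

lemma zero_mem_rhoSet (x : β) :
    0 ∈ {k : ℕ | ∃ s : Finset β,
      IsChain (· ≤ ·) (s : Set β) ∧ (s : Set β) ⊆ Set.Iic x ∧ s.card = k + 1} := by
  refine ⟨{x}, ?_, by simp, by simp⟩
  simp [IsChain, Set.Pairwise]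

lemma rhoSet_bddAbove [Finite β] {n : ℕ} (h : IsGradedOfRank β n) (x : β) :
    ∀ k ∈ {k : ℕ | ∃ s : Finset β,
      IsChain (· ≤ ·) (s : Set β) ∧ (s : Set β) ⊆ Set.Iic x ∧ s.card = k + 1}, k ≤ n := by
  rintro k ⟨s, hs, -, hcard⟩
  have := chain_card_le h hs
  omega

lemma rho_le [Finite β] {n : ℕ} (h : IsGradedOfRank β n) (x : β) : rho x ≤ n :=
  csSup_le ⟨0, zero_mem_rhoSet x⟩ (rhoSet_bddAbove h x)

lemma exists_rho_chain [Finite β] {n : ℕ} (h : IsGradedOfRank β n) (x : β) :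
    ∃ s : Finset β, IsChain (· ≤ ·) (s : Set β) ∧ (s : Set β) ⊆ Set.Iic x ∧
      x ∈ s ∧ s.card = rho x + 1 := by
  classical
  have hmem : rho x ∈ {k : ℕ | ∃ s : Finset β,
      IsChain (· ≤ ·) (s : Set β) ∧ (s : Set β) ⊆ Set.Iic x ∧ s.card = k + 1} :=
    Nat.sSup_mem ⟨0, zero_mem_rhoSet x⟩ ⟨n, rhoSet_bddAbove h x⟩
  obtain ⟨s, hs, hsub, hcard⟩ := hmem
  by_cases hx : x ∈ s
  · exact ⟨s, hs, hsub, hx, hcard⟩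
  · exfalso
    have hchain : IsChain (· ≤ ·) ((insert x s : Finset β) : Set β) := by
      rw [Finset.coe_insert]
      refine hs.insert (fun b hb _ => Or.inr (hsub hb))
    have hmem2 : rho x + 1 ∈ {k : ℕ | ∃ s : Finset β,
        IsChain (· ≤ ·) (s : Set β) ∧ (s : Set β) ⊆ Set.Iic x ∧ s.card = k + 1} := by
      refine ⟨insert x s, hchain, ?_, ?_⟩
      · rw [Finset.coe_insert]
        exact Set.insert_subset (le_refl x) hsub
      · rw [Finset.card_insert_of_notMem hx, hcard]
    have := le_csSup ⟨n, rhoSet_bddAbove h x⟩ hmem2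
    change rho x + 1 ≤ rho x at this
    omega

lemma rho_lt_rho [Finite β] {n : ℕ} (h : IsGradedOfRank β n) {x y : β}
    (hxy : x < y) : rho x < rho y := by
  classical
  obtain ⟨s, hs, hsub, hxs, hcard⟩ := exists_rho_chain h x
  have hy : y ∉ s := fun hy => absurd (hsub hy) (not_le_of_gt hxy)
  have hchain : IsChain (· ≤ ·) ((insert y s : Finset β) : Set β) := by
    rw [Finset.coe_insert]
    exact hs.insert (fun b hb _ => Or.inr ((hsub hb).trans hxy.le))
  have hmem : rho x + 1 ∈ {k : ℕ | ∃ s : Finset β,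
      IsChain (· ≤ ·) (s : Set β) ∧ (s : Set β) ⊆ Set.Iic y ∧ s.card = k + 1} := by
    refine ⟨insert y s, hchain, ?_, ?_⟩
    · rw [Finset.coe_insert]
      exact Set.insert_subset (le_refl y) (hsub.trans (Set.Iic_subset_Iic.2 hxy.le))
    · rw [Finset.card_insert_of_notMem hy, hcard]
  have := le_csSup ⟨n, rhoSet_bddAbove h y⟩ hmem
  change rho x + 1 ≤ rho y at this
  omega

lemma rho_mono [Finite β] {n : ℕ} (h : IsGradedOfRank β n) {x y : β}
    (hxy : x ≤ y) : rho x ≤ rho y := by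
  rcases eq_or_lt_of_le hxy with rfl | hlt
  · exact le_refl _
  · exact (rho_lt_rho h hlt).le

lemma lt_of_rho_lt [Finite β] {n : ℕ} (h : IsGradedOfRank β n) {x y : β}
    (hcomp : x ≤ y ∨ y ≤ x) (hr : rho x < rho y) : x < y := by
  rcases hcomp with hxy | hyx
  · exact lt_of_le_of_ne hxy (fun hexy => by simp [hexy] at hr)
  · exact absurd (rho_mono h hyx) (by omega)

end Aux


section Aux2

variable {β γ : Type} [PartialOrder β] [PartialOrder γ]

lemma MaxChain.image_rho [Finite β] {n : ℕ} {t : Finset β} (h : IsGradedOfRank β n)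
    (ht : MaxChain t) : t.image rho = Finset.range (n + 1) := by
  classical
  have hinj : Set.InjOn rho (t : Set β) := by
    intro a ha b hb hab
    by_contra hne
    rcases ht.1 ha hb hne with hle | hle
    · exact absurd hab (rho_lt_rho h (lt_of_le_of_ne hle hne)).ne
    · exact absurd hab.symm (rho_lt_rho h (lt_of_le_of_ne hle (Ne.symm hne))).ne
  have hcard : (t.image rho).card = n + 1 := by
    rw [Finset.card_image_of_injOn hinj, ht.card_eq h]
  have hsub : t.image rho ⊆ Finset.range (n + 1) := by
    intro k hk
    simp only [Finset.mem_image] at hk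
    obtain ⟨a, _, rfl⟩ := hk
    simp [Nat.lt_succ_iff, rho_le h a]
  exact Finset.eq_of_subset_of_card_le hsub (by simp [hcard])

lemma exists_rho_in_maxChain [Finite β] {n : ℕ} {t : Finset β} (h : IsGradedOfRank β n)
    (ht : MaxChain t) {k : ℕ} (hk : k ≤ n) : ∃ z ∈ t, rho z = k := by
  have : k ∈ t.image rho := by
    rw [ht.image_rho h]
    simp [Nat.lt_succ_iff, hk]
  simpa [Finset.mem_image] using this

lemma isChain_pair {x y : β} (hxy : x ≤ y) : IsChain (· ≤ ·) (({x, y} : Finset β) : Set β) := by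
  simp only [Finset.coe_insert, Finset.coe_singleton]
  intro a ha b hb hne
  simp only [Set.mem_insert_iff, Set.mem_singleton_iff] at ha hb
  rcases ha with rfl | rfl <;> rcases hb with rfl | rfl <;> simp_all

lemma CovBy.rho_eq [Finite β] {n : ℕ} (h : IsGradedOfRank β n) {x y : β}
    (hxy : x ⋖ y) : rho y = rho x + 1 := by
  have h1 : rho x < rho y := rho_lt_rho h hxy.lt
  by_contra hne
  have h2 : rho x + 1 < rho y := by omega
  obtain ⟨t, hst, ht⟩ := exists_maxChain _ (isChain_pair hxy.lt.le)
  have hxt : x ∈ t := hst (by simp)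
  have hyt : y ∈ t := hst (by simp)
  obtain ⟨z, hzt, hz⟩ := exists_rho_in_maxChain h ht
    (show rho x + 1 ≤ n by have := rho_le h y; omega)
  have hzx : z ≠ x := fun he => by rw [he] at hz; omega
  have hzy : z ≠ y := fun he => by rw [he] at hz; omega
  have h3 : x < z := lt_of_rho_lt h (ht.1 hxt hzt (Ne.symm hzx)) (by omega)
  have h4 : z < y := lt_of_rho_lt h (ht.1 hzt hyt hzy) (by omega)
  exact hxy.2 h3 h4

lemma covBy_of_rho [Finite β] {n : ℕ} (h : IsGradedOfRank β n) {x y : β}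
    (hxy : x < y) (hr : rho y = rho x + 1) : x ⋖ y := by
  refine ⟨hxy, fun z hz1 hz2 => ?_⟩
  have := rho_lt_rho h hz1
  have := rho_lt_rho h hz2
  omega

lemma exists_covBy_le [Finite β] {n : ℕ} (h : IsGradedOfRank β n) {x y : β}
    (hxy : x < y) : ∃ z, x ⋖ z ∧ z ≤ y := by
  obtain ⟨t, hst, ht⟩ := exists_maxChain _ (isChain_pair hxy.le)
  have hxt : x ∈ t := hst (by simp)
  have hyt : y ∈ t := hst (by simp)
  have hr : rho x < rho y := rho_lt_rho h hxy
  obtain ⟨z, hzt, hz⟩ := exists_rho_in_maxChain h ht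
    (show rho x + 1 ≤ n by have := rho_le h y; omega)
  have hzx : z ≠ x := fun he => by rw [he] at hz; omega
  have h3 : x < z := lt_of_rho_lt h (ht.1 hxt hzt (Ne.symm hzx)) (by omega)
  have h4 : z ≤ y := by
    by_cases hzy : z = y
    · exact hzy.le
    · rcases ht.1 hzt hyt hzy with hle | hle
      · exact hle
      · exact absurd (rho_lt_rho h (lt_of_le_of_ne hle (Ne.symm hzy))) (by omega)
  exact ⟨z, covBy_of_rho h h3 hz, h4⟩

lemma exists_le_covBy [Finite β] {n : ℕ} (h : IsGradedOfRank β n) {x y : β}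
    (hxy : x < y) : ∃ z, x ≤ z ∧ z ⋖ y := by
  obtain ⟨t, hst, ht⟩ := exists_maxChain _ (isChain_pair hxy.le)
  have hxt : x ∈ t := hst (by simp)
  have hyt : y ∈ t := hst (by simp)
  have hr : rho x < rho y := rho_lt_rho h hxy
  obtain ⟨z, hzt, hz⟩ := exists_rho_in_maxChain h ht
    (show rho y - 1 ≤ n by have := rho_le h y; omega)
  have hzy : z ≠ y := fun he => by rw [he] at hz; omega
  have h4 : z < y := lt_of_rho_lt h (ht.1 hzt hyt hzy) (by omega)
  have h3 : x ≤ z := by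
    by_cases hzx : z = x
    · exact hzx.ge
    · rcases ht.1 hxt hzt (Ne.symm hzx) with hle | hle
      · exact hle
      · exact absurd (rho_lt_rho h (lt_of_le_of_ne hle hzx)) (by omega)
  exact ⟨z, h3, covBy_of_rho h h4 (by omega)⟩

lemma rho_of_isMax [Finite β] {n : ℕ} (h : IsGradedOfRank β n) {m : β}
    (hm : ∀ z, z ≤ m) : rho m = n := by
  obtain ⟨t, -, ht⟩ := exists_maxChain (∅ : Finset β) (by simp)
  obtain ⟨z, hzt, hz⟩ := exists_rho_in_maxChain h ht (le_refl n)
  have hle := rho_le h m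
  rcases eq_or_lt_of_le (hm z) with rfl | hlt
  · exact hz
  · have := rho_lt_rho h hlt
    omega

end Aux2


section Aux3

variable {β γ : Type} [PartialOrder β] [PartialOrder γ]

lemma isChain_image (e : β ≃o γ) {s : Finset β} (hs : IsChain (· ≤ ·) (s : Set β)) :
    IsChain (· ≤ ·) ((s.image e : Finset γ) : Set γ) := by
  rw [Finset.coe_image]
  exact hs.image_of_map_rel _ _ _ (fun a b hab => e.monotone hab)

lemma rhoSet_subset (e : β ≃o γ) (x : β) :
    {k : ℕ | ∃ s : Finset β,
      IsChain (· ≤ ·) (s : Set β) ∧ (s : Set β) ⊆ Set.Iic x ∧ s.card = k + 1} ⊆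
    {k : ℕ | ∃ s : Finset γ,
      IsChain (· ≤ ·) (s : Set γ) ∧ (s : Set γ) ⊆ Set.Iic (e x) ∧ s.card = k + 1} := by
  classical
  rintro k ⟨s, hs, hsub, hcard⟩
  refine ⟨s.image e, isChain_image e hs, ?_, ?_⟩
  · rw [Finset.coe_image]
    rintro y ⟨a, ha, rfl⟩
    exact e.monotone (hsub ha)
  · rw [Finset.card_image_of_injective _ e.injective, hcard]

lemma rho_orderIso (e : β ≃o γ) (x : β) : rho (e x) = rho x := by
  unfold rho
  congr 1
  apply Set.Subset.antisymm
  · have := rhoSet_subset e.symm (e x)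
    rwa [e.symm_apply_apply] at this
  · exact rhoSet_subset e x

lemma maxChain_image (e : β ≃o γ) {t : Finset β} (ht : MaxChain t) :
    MaxChain (t.image e) := by
  classical
  refine ⟨isChain_image e ht.1, fun u hu htu => ?_⟩
  have h1 : t ⊆ u.image e.symm := by
    intro a ha
    simp only [Finset.mem_image]
    exact ⟨e a, htu (Finset.mem_image_of_mem _ ha), e.symm_apply_apply a⟩
  have h2 := ht.2 (u.image e.symm) (isChain_image e.symm hu) h1
  rw [h2, Finset.image_image]
  ext y
  simp only [Finset.mem_image, Function.comp_apply, OrderIso.apply_symm_apply]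
  exact ⟨fun ⟨a, ha, hay⟩ => hay ▸ ha, fun hy => ⟨y, hy, rfl⟩⟩

lemma isGradedOfRank_orderIso (e : β ≃o γ) {n : ℕ} (h : IsGradedOfRank β n) :
    IsGradedOfRank γ n := by
  classical
  intro s _ hs hmax
  have hmc : MaxChain s := by
    refine ⟨hs, fun u hu hsu => hmax u (Set.subset_univ _) hu hsu⟩
  have := maxChain_image e.symm hmc
  rw [← this.card_eq h, Finset.card_image_of_injective _ e.symm.injective]

lemma balanced_orderIso (e : β ≃o γ) (h : BalancedIntervalsIn (Set.univ : Set β)) :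
    BalancedIntervalsIn (Set.univ : Set γ) := by
  intro s _ t _ hst
  have hst' : e.symm s < e.symm t := by
    rw [← e.symm.lt_iff_lt] at hst
    exact hst
  have hb := h (e.symm s) trivial (e.symm t) trivial hst'
  have key : ∀ p : ℕ → Prop,
      {y ∈ Set.Icc s t | p (rho y)} = e '' {y ∈ Set.Icc (e.symm s) (e.symm t) | p (rho y)} := by
    intro p
    ext z
    simp only [Set.mem_setOf_eq, Set.mem_Icc]
    constructor
    · rintro ⟨⟨h1, h2⟩, h3⟩
      refine ⟨e.symm z, ⟨⟨e.symm.monotone h1, e.symm.monotone h2⟩, ?_⟩, e.apply_symm_apply z⟩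
      rw [← rho_orderIso e (e.symm z), e.apply_symm_apply]
      exact h3
    · rintro ⟨w, ⟨⟨h1, h2⟩, h3⟩, rfl⟩
      refine ⟨⟨?_, ?_⟩, ?_⟩
      · have := e.monotone h1; rwa [e.apply_symm_apply] at this
      · have := e.monotone h2; rwa [e.apply_symm_apply] at this
      · rwa [rho_orderIso e w]
  rw [key Even, key Odd, Set.ncard_image_of_injective _ e.injective,
    Set.ncard_image_of_injective _ e.injective]
  exact hb

lemma isEulerianOfRank_orderIso (e : β ≃o γ) {n : ℕ} (h : IsEulerianOfRank β n) :
    IsEulerianOfRank γ n := by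
  obtain ⟨⟨b, hb⟩, ⟨t, htt⟩, hg, hbal⟩ := h
  refine ⟨⟨e b, fun z => ?_⟩, ⟨e t, fun z => ?_⟩, isGradedOfRank_orderIso e hg,
    balanced_orderIso e hbal⟩
  · have := e.monotone (hb (e.symm z)); rwa [e.apply_symm_apply] at this
  · have := e.monotone (htt (e.symm z)); rwa [e.apply_symm_apply] at this

/-! Lower set subtypes -/

lemma rho_subtype {S : Set β} (hS : IsLowerSet S) (x : S) :
    rho x = rho (x : β) := by
  classical
  unfold rho
  congr 1
  ext k
  constructor
  · rintro ⟨s, hs, hsub, hcard⟩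
    refine ⟨s.image Subtype.val, ?_, ?_, ?_⟩
    · rw [Finset.coe_image]
      exact hs.image_of_map_rel _ _ Subtype.val (fun a b hab => hab)
    · rw [Finset.coe_image]
      rintro y ⟨a, ha, rfl⟩
      exact hsub ha
    · rw [Finset.card_image_of_injective _ Subtype.val_injective, hcard]
  · rintro ⟨s, hs, hsub, hcard⟩
    have hsS : ∀ a ∈ s, a ∈ S := fun a ha => hS (hsub ha) x.2
    refine ⟨s.subtype (· ∈ S), ?_, ?_, ?_⟩
    · intro a ha b hb hne
      simp only [Finset.mem_coe, Finset.mem_subtype] at ha hb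
      have := hs ha hb (fun hab => hne (Subtype.ext hab))
      exact this
    · intro a ha
      simp only [Finset.mem_coe, Finset.mem_subtype] at ha
      exact hsub ha
    · rw [Finset.card_subtype, Finset.filter_true_of_mem hsS, hcard]

lemma covBy_subtype {S : Set β} (hS : IsLowerSet S) {x z : S} :
    x ⋖ z ↔ (x : β) ⋖ (z : β) := by
  constructor
  · rintro ⟨hlt, hbet⟩
    refine ⟨Subtype.coe_lt_coe.2 hlt, fun y hy1 hy2 => ?_⟩
    have hyS : y ∈ S := hS hy2.le z.2
    exact hbet (show x < ⟨y, hyS⟩ from Subtype.coe_lt_coe.1 hy1)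
      (show (⟨y, hyS⟩ : S) < z from Subtype.coe_lt_coe.1 hy2)
  · rintro ⟨hlt, hbet⟩
    exact ⟨Subtype.coe_lt_coe.1 hlt, fun y hy1 hy2 =>
      hbet (Subtype.coe_lt_coe.2 hy1) (Subtype.coe_lt_coe.2 hy2)⟩

lemma covBy_orderIso (e : β ≃o γ) {x z : β} : e x ⋖ e z ↔ x ⋖ z := by
  constructor
  · rintro ⟨hlt, hbet⟩
    refine ⟨e.lt_iff_lt.1 hlt, fun y hy1 hy2 => ?_⟩
    exact hbet (show e x < e y from e.lt_iff_lt.2 hy1) (show e y < e z from e.lt_iff_lt.2 hy2)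
  · rintro ⟨hlt, hbet⟩
    refine ⟨e.lt_iff_lt.2 hlt, fun y hy1 hy2 => ?_⟩
    have h1 : x < e.symm y := by
      have := e.symm.lt_iff_lt.2 hy1; rwa [e.symm_apply_apply] at this
    have h2 : e.symm y < z := by
      have := e.symm.lt_iff_lt.2 hy2; rwa [e.symm_apply_apply] at this
    exact hbet h1 h2

end Aux3


section Aux4

variable {β : Type} [PartialOrder β]

lemma diamond [Finite β] {m : ℕ} (hg : IsGradedOfRank β (m + 2))
    (hbal : BalancedIntervalsIn (Set.univ : Set β)) {top : β} (htop : ∀ z, z ≤ top)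
    {y : β} (hy : rho y = m) : {z : β | y ⋖ z}.ncard = 2 := by
  have hrt : rho top = m + 2 := rho_of_isMax hg htop
  have hyt : y ≠ top := fun he => by rw [he, hrt] at hy; omega
  have hylt : y < top := lt_of_le_of_ne (htop y) hyt
  set M := {z : β | z ∈ Set.Icc y top ∧ rho z = m + 1} with hM
  have hIcc : ∀ z ∈ Set.Icc y top, rho z = m ∨ rho z = m + 1 ∨ rho z = m + 2 := by
    rintro z ⟨h1, h2⟩
    have := rho_mono hg h1
    have := rho_mono hg h2
    omega
  have hym : ∀ z ∈ Set.Icc y top, rho z = m → z = y := by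
    rintro z ⟨h1, -⟩ hz
    rcases eq_or_lt_of_le h1 with rfl | hlt
    · rfl
    · have := rho_lt_rho hg hlt; omega
  have htm : ∀ z ∈ Set.Icc y top, rho z = m + 2 → z = top := by
    rintro z ⟨-, h2⟩ hz
    rcases eq_or_lt_of_le h2 with rfl | hlt
    · rfl
    · have := rho_lt_rho hg hlt; omega
  have hyI : y ∈ Set.Icc y top := ⟨le_refl y, htop y⟩
  have htI : top ∈ Set.Icc y top := ⟨hylt.le, le_refl top⟩
  have hb := hbal y trivial top trivial hylt
  have hMn : M.ncard = 2 := by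
    rcases Nat.even_or_odd m with hm | hm
    · have hE : {z | z ∈ Set.Icc y top ∧ Even (rho z)} = {y, top} := by
        ext z
        simp only [Set.mem_setOf_eq, Set.mem_insert_iff, Set.mem_singleton_iff]
        constructor
        · rintro ⟨hz, hev⟩
          rcases hIcc z hz with h | h | h
          · exact Or.inl (hym z hz h)
          · rw [h, Nat.even_iff] at hev
            rw [Nat.even_iff] at hm
            omega
          · exact Or.inr (htm z hz h)
        · rintro (rfl | rfl)
          · exact ⟨hyI, hy ▸ hm⟩
          · refine ⟨htI, ?_⟩
            rw [hrt, Nat.even_iff]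
            rw [Nat.even_iff] at hm
            omega
      have hO : {z | z ∈ Set.Icc y top ∧ Odd (rho z)} = M := by
        ext z
        simp only [Set.mem_setOf_eq, hM]
        constructor
        · rintro ⟨hz, hod⟩
          refine ⟨hz, ?_⟩
          rcases hIcc z hz with h | h | h <;>
            (rw [h, Nat.odd_iff] at hod; rw [Nat.even_iff] at hm; omega)
        · rintro ⟨hz, hr⟩
          refine ⟨hz, ?_⟩
          rw [hr, Nat.odd_iff]
          rw [Nat.even_iff] at hm
          omega
      rw [hE, hO] at hb
      rw [← hb, Set.ncard_pair hyt]
    · have hE : {z | z ∈ Set.Icc y top ∧ Even (rho z)} = M := by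
        ext z
        simp only [Set.mem_setOf_eq, hM]
        constructor
        · rintro ⟨hz, hev⟩
          refine ⟨hz, ?_⟩
          rcases hIcc z hz with h | h | h <;>
            (rw [h, Nat.even_iff] at hev; rw [Nat.odd_iff] at hm; omega)
        · rintro ⟨hz, hr⟩
          refine ⟨hz, ?_⟩
          rw [hr, Nat.even_iff]
          rw [Nat.odd_iff] at hm
          omega
      have hO : {z | z ∈ Set.Icc y top ∧ Odd (rho z)} = {y, top} := by
        ext z
        simp only [Set.mem_setOf_eq, Set.mem_insert_iff, Set.mem_singleton_iff]
        constructor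
        · rintro ⟨hz, hod⟩
          rcases hIcc z hz with h | h | h
          · exact Or.inl (hym z hz h)
          · rw [h, Nat.odd_iff] at hod
            rw [Nat.odd_iff] at hm
            omega
          · exact Or.inr (htm z hz h)
        · rintro (rfl | rfl)
          · exact ⟨hyI, hy ▸ hm⟩
          · refine ⟨htI, ?_⟩
            rw [hrt, Nat.odd_iff]
            rw [Nat.odd_iff] at hm
            omega
      rw [hE, hO] at hb
      rw [hb, Set.ncard_pair hyt]
  have hcov : {z : β | y ⋖ z} = M := by
    ext z
    simp only [Set.mem_setOf_eq, hM]
    constructor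
    · intro hc
      have hr := CovBy.rho_eq hg hc
      rw [hy] at hr
      exact ⟨⟨hc.lt.le, htop z⟩, hr⟩
    · rintro ⟨⟨h1, h2⟩, hr⟩
      have hne : y ≠ z := fun he => by rw [← he, hy] at hr; omega
      exact covBy_of_rho hg (lt_of_le_of_ne h1 hne) (by omega)
  rw [hcov]; exact hMn

lemma covers_away_ncard [Finite β] {m : ℕ} (hg : IsGradedOfRank β (m + 2))
    (hbal : BalancedIntervalsIn (Set.univ : Set β)) {top q : β} (htop : ∀ z, z ≤ top)
    (hq : rho q = m + 1) {y : β} (hy : rho y = m) :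
    {z : β | (z ≠ q ∧ z ≠ top) ∧ y ⋖ z}.ncard = 1 ↔ y < q := by
  have hdi := diamond hg hbal htop hy
  have htopnot : top ∉ {z : β | y ⋖ z} := by
    intro hc
    have := CovBy.rho_eq hg (hc : y ⋖ top)
    rw [rho_of_isMax hg htop, hy] at this
    omega
  have hset : {z : β | (z ≠ q ∧ z ≠ top) ∧ y ⋖ z} = {z : β | y ⋖ z} \ {q} := by
    ext z
    simp only [Set.mem_setOf_eq, Set.mem_diff, Set.mem_singleton_iff]
    constructor
    · rintro ⟨⟨h1, -⟩, h3⟩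
      exact ⟨h3, h1⟩
    · rintro ⟨h3, h1⟩
      exact ⟨⟨h1, fun he => htopnot (he ▸ h3)⟩, h3⟩
  rw [hset]
  constructor
  · intro h1
    by_contra hyq
    have hqnot : q ∉ {z : β | y ⋖ z} := fun hc => hyq (hc : y ⋖ q).lt
    rw [Set.diff_singleton_eq_self hqnot, hdi] at h1
    omega
  · intro hyq
    have hqin : q ∈ {z : β | y ⋖ z} := covBy_of_rho hg hyq (by omega)
    rw [Set.ncard_diff_singleton_of_mem hqin, hdi]

end Aux4


section SemiAux

variable {α : Type} [PartialOrder α] [OrderBot α] {S : Set α}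

lemma Semisusp.incl_le_incl_iff {a b : α} :
    (Semisusp.incl a : Semisusp α S) ≤ Semisusp.incl b ↔ a ≤ b := Iff.rfl

lemma Semisusp.incl_le_q_iff {a : α} :
    (Semisusp.incl a : Semisusp α S) ≤ Semisusp.q ↔ a = ⊥ ∨ ∃ s ∈ S, a ≤ s := Iff.rfl

lemma Semisusp.not_q_le_incl {a : α} : ¬ (Semisusp.q : Semisusp α S) ≤ Semisusp.incl a :=
  fun h => h

lemma Semisusp.incl_ne_q {a : α} : (Semisusp.incl a : Semisusp α S) ≠ Semisusp.q :=
  fun h => Option.some_ne_none _ (congrArg Semisusp.toOpt h)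

lemma Semisusp.eq_q_or_incl (x : Semisusp α S) :
    x = Semisusp.q ∨ ∃ a : α, x = Semisusp.incl a := by
  obtain ⟨_ | a⟩ := x
  · exact Or.inl rfl
  · exact Or.inr ⟨a, rfl⟩

instance instFiniteWithTop {γ : Type} [Finite γ] : Finite (WithTop γ) := by
  have := Fintype.ofFinite γ
  exact Finite.of_equiv (Option γ) (Equiv.refl _)

lemma backward_dir {α : Type} [PartialOrder α] [Finite α] [OrderBot α] {n : ℕ}
    (hQ : IsEulerianOfRank (WithTop (Semisusp α (boundary α n))) (n + 1)) :
    IsNearEulerianOfRank α n := by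
  classical
  set S := boundary α n with hS
  obtain ⟨hbot, htopE, hg, hbal⟩ := hQ
  set q0 : Semisusp α S := Semisusp.q with hq0
  have hcov : (↑q0 : WithTop (Semisusp α S)) ⋖ ⊤ := by
    refine ⟨WithTop.coe_lt_top _, fun z h1 h2 => ?_⟩
    have hzt : z ≠ ⊤ := h2.ne
    obtain ⟨s, rfl⟩ := WithTop.ne_top_iff_exists.1 hzt
    have h1' : q0 < s := WithTop.coe_lt_coe.1 h1
    rcases Semisusp.eq_q_or_incl s with rfl | ⟨a, rfl⟩
    · exact lt_irrefl _ h1'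
    · exact Semisusp.not_q_le_incl h1'.le
  have hrtop : rho (⊤ : WithTop (Semisusp α S)) = n + 1 :=
    rho_of_isMax hg (fun z => le_top)
  have hrq : rho (↑q0 : WithTop (Semisusp α S)) = n := by
    have := CovBy.rho_eq hg hcov
    rw [hrtop] at this
    omega
  have hprop : ∀ a : α, ((Semisusp.incl a : Semisusp α S) : WithTop (Semisusp α S)) ≠ ↑q0 ∧
      ((Semisusp.incl a : Semisusp α S) : WithTop (Semisusp α S)) ≠ ⊤ := by
    intro a
    constructor
    · exact fun he => Semisusp.incl_ne_q (WithTop.coe_inj.1 he)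
    · exact WithTop.coe_ne_top
  have hiso : α ≃o {x : WithTop (Semisusp α S) // x ≠ ↑q0 ∧ x ≠ ⊤} :=
    { toFun := fun a => ⟨_, hprop a⟩
      invFun := fun x => WithTop.recTopCoe ⊥ (fun s => s.toOpt.getD ⊥) x.1
      left_inv := fun a => by simp [Semisusp.incl]
      right_inv := fun x => by
        obtain ⟨x, hx1, hx2⟩ := x
        obtain ⟨s, rfl⟩ := WithTop.ne_top_iff_exists.1 hx2
        rcases Semisusp.eq_q_or_incl s with rfl | ⟨a, rfl⟩
        · exact absurd rfl hx1
        · apply Subtype.ext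
          simp [Semisusp.incl]
      map_rel_iff' := by
        intro a b
        constructor
        · intro hab
          exact Semisusp.incl_le_incl_iff.1 (WithTop.coe_le_coe.1 hab)
        · intro hab
          exact (WithTop.coe_le_coe.2 (Semisusp.incl_le_incl_iff.2 hab) :
            ((Semisusp.incl a : Semisusp α S) : WithTop (Semisusp α S)) ≤
              ((Semisusp.incl b : Semisusp α S) : WithTop (Semisusp α S))) }
  exact ⟨WithTop (Semisusp α S), inferInstance, inferInstance, ↑q0, ⊤,
    ⟨hbot, htopE, hg, hbal⟩, fun z => le_top, hrq, WithTop.coe_ne_top, ⟨hiso⟩⟩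

end SemiAux


lemma forward_dir {α : Type} [PartialOrder α] [Finite α] [OrderBot α] {n : ℕ}
    (hN : IsNearEulerianOfRank α n) :
    IsEulerianOfRank (WithTop (Semisusp α (boundary α n))) (n + 1) := by
  classical
  obtain ⟨Q, _, _, q, top, hE, htop, hrq, hqt, ⟨e⟩⟩ := hN
  obtain ⟨⟨b, hb⟩, -, hg, hbal⟩ := hE
  have hqtop : q < top := lt_of_le_of_ne (htop q) hqt
  have hrtop : rho top = n + 1 := rho_of_isMax hg htop
  have key1 : ∀ x : Q, q < x → x = top := by
    intro x hx
    have h1 : rho x ≤ n + 1 := rho_le hg x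
    have h2 : rho q < rho x := rho_lt_rho hg hx
    rw [hrq] at h2
    by_contra hne
    have h3 := rho_lt_rho hg (lt_of_le_of_ne (htop x) hne)
    rw [hrtop] at h3
    omega
  set Pset : Set Q := {x : Q | x ≠ q ∧ x ≠ top} with hPset
  have hPlow : IsLowerSet Pset := by
    intro x y hyx hx
    constructor
    · intro he
      exact hx.2 (key1 x (lt_of_le_of_ne (he ▸ hyx) (fun h2 => hx.1 h2.symm)))
    · intro he
      exact hx.2 (le_antisymm (htop x) (he ▸ hyx))
  have e' : α ≃o ↥Pset := e
  -- bot of Q is in Pset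
  have hbtop : b ≠ top := fun he => hqt (le_antisymm (htop q) (he ▸ hb q))
  have hbq : b ≠ q := by
    intro he
    have h1 := (e' ⊥).2
    exact h1.2 (key1 _ (lt_of_le_of_ne (he ▸ hb _) (fun h2 => h1.1 h2.symm)))
  have hbP : b ∈ Pset := ⟨hbq, hbtop⟩
  have hn1 : 1 ≤ n := by
    have := rho_lt_rho hg (lt_of_le_of_ne (hb q) hbq)
    rw [hrq] at this
    omega
  obtain ⟨m, rfl⟩ : ∃ m, n = m + 1 := ⟨n - 1, by omega⟩
  -- rank transfer
  have hrsub : ∀ x : ↥Pset, rho x = rho (x : Q) := rho_subtype hPlow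
  have hrtrans : ∀ w : α, rho ((e' w : Q)) = rho w := fun w =>
    (hrsub (e' w)).symm.trans (rho_orderIso e' w)
  -- cover count transfer
  have hcovtrans : ∀ w : α,
      {z : Q | (z ≠ q ∧ z ≠ top) ∧ (e' w : Q) ⋖ z}.ncard = {z : α | w ⋖ z}.ncard := by
    intro w
    have h1 : {z : Q | (z ≠ q ∧ z ≠ top) ∧ (e' w : Q) ⋖ z} =
        (fun z : ↥Pset => (z : Q)) '' {z : ↥Pset | e' w ⋖ z} := by
      ext z
      constructor
      · rintro ⟨hz, hc⟩
        exact ⟨⟨z, hz⟩, (covBy_subtype hPlow).2 hc, rfl⟩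
      · rintro ⟨z', hc, rfl⟩
        exact ⟨z'.2, (covBy_subtype hPlow).1 hc⟩
    have h2 : {z : ↥Pset | e' w ⋖ z} = e' '' {z : α | w ⋖ z} := by
      ext z
      constructor
      · intro hc
        refine ⟨e'.symm z, (covBy_orderIso e').1 ?_, e'.apply_symm_apply z⟩
        rwa [e'.apply_symm_apply]
      · rintro ⟨z', hc, rfl⟩
        exact (covBy_orderIso e').2 hc
    rw [h1, Set.ncard_image_of_injective _ Subtype.val_injective, h2,
      Set.ncard_image_of_injective _ e'.injective]
  -- boundary membership characterization
  have hbmem : ∀ s : α, s ∈ boundary α (m + 1) ↔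
      ∃ w : α, rho w = m ∧ {z : α | w ⋖ z}.ncard = 1 ∧ s ≤ w := by
    intro s
    simp only [boundary, boundaryIn, Set.mem_setOf_eq, Set.mem_univ, true_and,
      Set.sep_univ, Nat.add_sub_cancel]
  -- bot image
  have hebot : ((e' ⊥ : ↥Pset) : Q) = b := by
    refine le_antisymm ?_ (hb _)
    have h1 : e' ⊥ ≤ e' (e'.symm ⟨b, hbP⟩) := e'.monotone bot_le
    rw [e'.apply_symm_apply] at h1
    exact h1
  -- the crux
  have crux : ∀ a : α, ((e' a : Q) ≤ q ↔ (a = ⊥ ∨ ∃ s ∈ boundary α (m + 1), a ≤ s)) := by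
    intro a
    constructor
    · intro hle
      have hlt : (e' a : Q) < q := lt_of_le_of_ne hle (e' a).2.1
      obtain ⟨y, hxy, hycov⟩ := exists_le_covBy hg hlt
      have hry : rho y = m := by
        have := CovBy.rho_eq hg hycov
        rw [hrq] at this
        omega
      have hyP : y ∈ Pset := by
        refine ⟨hycov.lt.ne, fun he => ?_⟩
        rw [he] at hycov
        exact absurd (hycov.lt.trans_le (htop q)) (lt_irrefl top)
      set w := e'.symm ⟨y, hyP⟩ with hw
      have hew : ((e' w : ↥Pset) : Q) = y := by rw [hw, e'.apply_symm_apply]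
      have h1 : rho w = m := by rw [← hrtrans w, hew, hry]
      have h2 : {z : α | w ⋖ z}.ncard = 1 := by
        rw [← hcovtrans w, hew]
        exact (covers_away_ncard hg hbal htop hrq hry).2 hycov.lt
      have h3 : a ≤ w := by
        have : e' a ≤ (⟨y, hyP⟩ : ↥Pset) := hxy
        have h4 := e'.symm.monotone this
        rwa [e'.symm_apply_apply] at h4
      exact Or.inr ⟨w, (hbmem w).2 ⟨w, h1, h2, le_refl w⟩, h3⟩
    · rintro (rfl | ⟨s, hsB, has⟩)
      · rw [hebot]
        exact hb q
      · obtain ⟨w, hw1, hw2, hsw⟩ := (hbmem s).1 hsB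
        have h1 : rho ((e' w : Q)) = m := by rw [hrtrans w, hw1]
        have h2 : {z : Q | (z ≠ q ∧ z ≠ top) ∧ (e' w : Q) ⋖ z}.ncard = 1 := by
          rw [hcovtrans w]; exact hw2
        have h3 : (e' w : Q) < q := (covers_away_ncard hg hbal htop hrq h1).1 h2
        have h4 : (e' a : Q) ≤ (e' w : Q) := e'.monotone (has.trans hsw)
        exact h4.trans h3.le
  -- the order isomorphism
  have hqval : ∀ a : α, ((e' a : ↥Pset) : Q) ≠ q := fun a => (e' a).2.1
  have htval : ∀ a : α, ((e' a : ↥Pset) : Q) ≠ top := fun a => (e' a).2.2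
  have hiso : WithTop (Semisusp α (boundary α (m + 1))) ≃o Q :=
    { toFun := fun t => WithTop.recTopCoe top
        (fun s => Option.elim s.toOpt q (fun a => ((e' a : ↥Pset) : Q))) t
      invFun := fun x => if hx : x = top then ⊤ else if hq2 : x = q
        then ((Semisusp.q : Semisusp α (boundary α (m + 1))) :
          WithTop (Semisusp α (boundary α (m + 1))))
        else ((Semisusp.incl (e'.symm ⟨x, ⟨hq2, hx⟩⟩) : Semisusp α (boundary α (m + 1))) :
          WithTop (Semisusp α (boundary α (m + 1))))
      left_inv := by
        intro t
        induction t using WithTop.recTopCoe with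
        | top => simp
        | coe s =>
          rcases Semisusp.eq_q_or_incl s with rfl | ⟨a, rfl⟩
          · simp [Semisusp.q, hqt]
          · simp only [WithTop.recTopCoe_coe, Semisusp.incl, Option.elim,
              dif_neg (htval a), dif_neg (hqval a)]
            simp only [htval a, hqval a, reduceDIte]
            rw [show (⟨((e' a : ↥Pset) : Q), ⟨hqval a, htval a⟩⟩ : ↥Pset) = e' a from
              Subtype.ext rfl, e'.symm_apply_apply]
      right_inv := by
        intro x
        by_cases hx : x = top
        · subst hx; simp
        · by_cases hq2 : x = q
          · subst hq2; simp [hx, Semisusp.q]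
          · simp only [dif_neg hx, dif_neg hq2, WithTop.recTopCoe_coe, Semisusp.incl,
              Option.elim]
            exact congrArg Subtype.val (e'.apply_symm_apply ⟨x, ⟨hq2, hx⟩⟩)
      map_rel_iff' := by
        intro s t
        induction t using WithTop.recTopCoe with
        | top =>
          simp only [Equiv.coe_fn_mk, WithTop.recTopCoe_top]
          exact iff_of_true (htop _) le_top
        | coe t0 =>
          induction s using WithTop.recTopCoe with
          | top =>
            simp only [Equiv.coe_fn_mk, WithTop.recTopCoe_top, WithTop.recTopCoe_coe]
            refine iff_of_false ?_ ?_
            · rcases Semisusp.eq_q_or_incl t0 with rfl | ⟨a, rfl⟩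
              · exact fun hle => hqt (le_antisymm (htop q) hle)
              · exact fun hle => htval a (le_antisymm (htop _) hle)
            · exact fun hle => WithTop.coe_ne_top (top_le_iff.1 hle)
          | coe s0 =>
            simp only [Equiv.coe_fn_mk, WithTop.recTopCoe_coe]
            rw [WithTop.coe_le_coe]
            rcases Semisusp.eq_q_or_incl s0 with rfl | ⟨a, rfl⟩ <;>
              rcases Semisusp.eq_q_or_incl t0 with rfl | ⟨c, rfl⟩
            · exact iff_of_true (le_refl q) (le_refl _)
            · refine iff_of_false ?_ Semisusp.not_q_le_incl
              intro hle
              exact htval c (key1 _ (lt_of_le_of_ne hle (fun he => hqval c he.symm)))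
            · exact (crux a).trans Semisusp.incl_le_q_iff.symm
            · constructor
              · intro hle
                exact Semisusp.incl_le_incl_iff.2 (e'.le_iff_le.1 hle)
              · intro hle
                exact e'.monotone (Semisusp.incl_le_incl_iff.1 hle)
    }
  exact isEulerianOfRank_orderIso hiso.symm ⟨⟨b, hb⟩, ⟨top, htop⟩, hg, hbal⟩

/-- Let `P` be a graded poset of rank `n` with `0̂`.  Then `P` is
near-Eulerian if and only if the semisuspension `Σ̃P` is the boundary of an Eulerian
poset, i.e. if and only if the poset `Σ̃P ∪ {1̂}` obtained by adjoining a maximal element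
to `Σ̃P` is Eulerian (of rank `n + 1`). -/
theorem isNearEulerian_iff_semisusp_boundary
    (α : Type) [PartialOrder α] [Finite α] [OrderBot α] (n : ℕ)
    (h : IsGradedOfRank α n) :
    IsNearEulerianOfRank α n ↔
      IsEulerianOfRank (WithTop (Semisusp α (boundary α n))) (n + 1) :=
  ⟨forward_dir, backward_dir⟩

end CDIndex
end
end

section
/- Near-Eulerian criterion for posets: Let P be a lower Eulerian poset of rank n. Then P is near-Eulerian if and only if n > 0 and there exists a graded lower order ideal I of P of rank n−1 such that: (1) for every x ∈ I one has Σ_{y ∈ I ∩ [x,∞)} (−1)^{ρ(y)} = (−1)^{n+1} and Σ_{y ∈ [x,∞)} (−1)^{ρ(y)} = 0; and (2) for every x ∉ I one has Σ_{y ∈ [x,∞)} (−1)^{ρ(y)} = (−1)^{n}. Moreover, if these conditions hold for I, then I = ∂P. -/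
open scoped Classical

noncomputable section

namespace CDIndex

variable {α β : Type}

/-- The conditions on a graded lower order ideal `I` of rank `n - 1` appearing in the
near-Eulerian criterion for posets. -/
def NearEulerianCrit (α : Type) [PartialOrder α] (n : ℕ) (I : Set α) : Prop :=
  IsLowerSet I ∧ IsGradedSetOfRank I (n - 1) ∧
  (∀ x ∈ I,
    (∑ᶠ y ∈ {y | y ∈ I ∧ x ≤ y}, ((-1 : ℤ) ^ rho y)) = (-1) ^ (n + 1) ∧
    (∑ᶠ y ∈ Set.Ici x, ((-1 : ℤ) ^ rho y)) = 0) ∧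
  (∀ x ∉ I, (∑ᶠ y ∈ Set.Ici x, ((-1 : ℤ) ^ rho y)) = (-1) ^ n)

/-- Maximal chain in a subset `S`. -/
def MaxChainIn [PartialOrder α] (S : Set α) (s : Finset α) : Prop :=
  (s : Set α) ⊆ S ∧ IsChain (· ≤ ·) (s : Set α) ∧
  ∀ t : Finset α, (t : Set α) ⊆ S → IsChain (· ≤ ·) (t : Set α) → s ⊆ t → s = t

section Chains

variable [PartialOrder α] [Finite α]
set_option linter.unusedSectionVars false
set_option linter.unusedVariables false

/-- Every chain in `S` extends to a maximal chain in `S`. -/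
lemma exists_maxChainIn (S : Set α) (s : Finset α) (hsS : (s : Set α) ⊆ S)
    (hsc : IsChain (· ≤ ·) (s : Set α)) : ∃ t, MaxChainIn S t ∧ s ⊆ t := by
  haveI := Fintype.ofFinite α
  set T : Finset (Finset α) := Finset.univ.filter
    (fun t : Finset α => (t : Set α) ⊆ S ∧ IsChain (· ≤ ·) (t : Set α) ∧ s ⊆ t) with hT
  have hsT : s ∈ T := by simp [hT, hsS, hsc]
  obtain ⟨m, hmT, hmax⟩ := T.exists_maximal ⟨s, hsT⟩
  simp only [hT, Finset.mem_filter] at hmT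
  refine ⟨m, ⟨hmT.2.1, hmT.2.2.1, ?_⟩, hmT.2.2.2⟩
  intro t htS htc hmt
  by_contra hne
  exact hne (le_antisymm hmt (hmax (by simp [hT, htS, htc, hmT.2.2.2.trans hmt]) hmt))

lemma MaxChainIn.mem_self {S : Set α} {s : Finset α} (h : MaxChainIn S s) {x : α}
    (hx : x ∈ S) (hcomp : ∀ y ∈ s, x ≤ y ∨ y ≤ x) : x ∈ s := by
  have h1 : ((insert x s : Finset α) : Set α) ⊆ S := by
    rw [Finset.coe_insert]; exact Set.insert_subset hx h.1
  have h2 : IsChain (· ≤ ·) ((insert x s : Finset α) : Set α) := by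
    rw [Finset.coe_insert]
    exact h.2.1.insert (fun b hb _ => hcomp b hb)
  have := h.2.2 _ h1 h2 (Finset.subset_insert x s)
  rw [this]; exact Finset.mem_insert_self x s

lemma MaxChainIn.nonempty {S : Set α} {s : Finset α} (h : MaxChainIn S s)
    (hS : S.Nonempty) : s.Nonempty := by
  by_contra he
  rw [Finset.not_nonempty_iff_eq_empty] at he
  obtain ⟨x, hx⟩ := hS
  have : x ∈ s := h.mem_self hx (by simp [he])
  simp [he] at this

/-- A maximal chain of `Set.Iic x` contains `x`. -/
lemma MaxChainIn.top_mem {x : α} {s : Finset α} (h : MaxChainIn (Set.Iic x) s) : x ∈ s :=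
  h.mem_self le_rfl (fun y hy => .inr (h.1 hy))

lemma MaxChainIn.left_mem {x y : α} (hxy : x ≤ y) {s : Finset α}
    (h : MaxChainIn (Set.Icc x y) s) : x ∈ s :=
  h.mem_self ⟨le_rfl, hxy⟩ (fun z hz => .inl (h.1 hz).1)

lemma MaxChainIn.right_mem {x y : α} (hxy : x ≤ y) {s : Finset α}
    (h : MaxChainIn (Set.Icc x y) s) : y ∈ s :=
  h.mem_self ⟨hxy, le_rfl⟩ (fun z hz => .inr (h.1 hz).2)

/-- Gluing a maximal chain of `Iic x` and a maximal chain of `Icc x y`. -/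
lemma maxChainIn_glue_low {x y : α} (hxy : x ≤ y) {e c : Finset α}
    (he : MaxChainIn (Set.Iic x) e) (hc : MaxChainIn (Set.Icc x y) c) :
    MaxChainIn (Set.Iic y) (e ∪ c) ∧ (e ∪ c).card + 1 = e.card + c.card := by
  have hec : ∀ a ∈ e, ∀ b ∈ c, a ≤ b := fun a ha b hb => (he.1 ha).trans (hc.1 hb).1
  have hchain : IsChain (· ≤ ·) ((e ∪ c : Finset α) : Set α) := by
    intro a ha b hb hab
    rw [Finset.coe_union, Set.mem_union, Finset.mem_coe, Finset.mem_coe] at ha hb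
    rcases ha with ha | ha <;> rcases hb with hb | hb
    · exact he.2.1 ha hb hab
    · exact .inl (hec a ha b hb)
    · exact .inr (hec b hb a ha)
    · exact hc.2.1 ha hb hab
  have hsub : ((e ∪ c : Finset α) : Set α) ⊆ Set.Iic y := by
    rw [Finset.coe_union]
    exact Set.union_subset (fun a ha => (he.1 ha).trans hxy) (fun a ha => (hc.1 ha).2)
  have hinter : e ∩ c = {x} := by
    ext z
    simp only [Finset.mem_inter, Finset.mem_singleton]
    constructor
    · rintro ⟨hz1, hz2⟩
      exact le_antisymm (he.1 hz1) (hc.1 hz2).1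
    · rintro rfl
      exact ⟨he.top_mem, hc.left_mem hxy⟩
  constructor
  · refine ⟨hsub, hchain, ?_⟩
    intro t htS htc hst
    symm
    apply Finset.Subset.antisymm _ hst
    intro z hz
    have hcompz : ∀ w ∈ e ∪ c, z ≤ w ∨ w ≤ z := fun w hw =>
      (htc.total (hst hw) hz).symm.imp (fun h => h) (fun h => h)
    have hzy : z ≤ y := htS hz
    have hzx : z ≤ x ∨ x ≤ z := hcompz x (Finset.mem_union_left _ he.top_mem)
    rcases hzx with h | h
    · refine Finset.mem_union_left _ ?_
      have : z ∈ e := he.mem_self h (fun w hw => hcompz w (Finset.mem_union_left _ hw))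
      exact this
    · refine Finset.mem_union_right _ ?_
      exact hc.mem_self ⟨h, hzy⟩ (fun w hw => hcompz w (Finset.mem_union_right _ hw))
  · have := Finset.card_union_add_card_inter e c
    rw [hinter] at this
    simpa using this

/-- Gluing a maximal chain of `Iic y` and a maximal chain of `{z ∈ S | y ≤ z}`,
    for `S` a lower set. -/
lemma maxChainIn_glue_high {S : Set α} (hS : IsLowerSet S) {y : α} (hy : y ∈ S)
    {u d : Finset α} (hu : MaxChainIn (Set.Iic y) u)
    (hd : MaxChainIn {z ∈ S | y ≤ z} d) :
    MaxChainIn S (u ∪ d) ∧ (u ∪ d).card + 1 = u.card + d.card := by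
  have hud : ∀ a ∈ u, ∀ b ∈ d, a ≤ b := fun a ha b hb => (hu.1 ha).trans (hd.1 hb).2
  have hchain : IsChain (· ≤ ·) ((u ∪ d : Finset α) : Set α) := by
    intro a ha b hb hab
    rw [Finset.coe_union, Set.mem_union, Finset.mem_coe, Finset.mem_coe] at ha hb
    rcases ha with ha | ha <;> rcases hb with hb | hb
    · exact hu.2.1 ha hb hab
    · exact .inl (hud a ha b hb)
    · exact .inr (hud b hb a ha)
    · exact hd.2.1 ha hb hab
  have hsub : ((u ∪ d : Finset α) : Set α) ⊆ S := by
    rw [Finset.coe_union]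
    exact Set.union_subset (fun a ha => hS (hu.1 ha) hy) (fun a ha => (hd.1 ha).1)
  have hinter : u ∩ d = {y} := by
    ext z
    simp only [Finset.mem_inter, Finset.mem_singleton]
    constructor
    · rintro ⟨hz1, hz2⟩
      exact le_antisymm (hu.1 hz1) (hd.1 hz2).2
    · rintro rfl
      exact ⟨hu.top_mem, hd.mem_self ⟨hy, le_rfl⟩ (fun w hw => .inl (hd.1 hw).2)⟩
  constructor
  · refine ⟨hsub, hchain, ?_⟩
    intro t htS htc hst
    symm
    apply Finset.Subset.antisymm _ hst
    intro z hz
    have hcompz : ∀ w ∈ u ∪ d, z ≤ w ∨ w ≤ z := fun w hw =>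
      (htc.total (hst hw) hz).symm.imp (fun h => h) (fun h => h)
    have hzy : z ≤ y ∨ y ≤ z := hcompz y (Finset.mem_union_left _ hu.top_mem)
    rcases hzy with h | h
    · exact Finset.mem_union_left _
        (hu.mem_self h (fun w hw => hcompz w (Finset.mem_union_left _ hw)))
    · exact Finset.mem_union_right _ (hd.mem_self ⟨htS hz, h⟩
        (fun w hw => hcompz w (Finset.mem_union_right _ hw)))
  · have := Finset.card_union_add_card_inter u d
    rw [hinter] at this
    simpa using this

end Chains

section Graded

variable [PartialOrder α] [Finite α]
set_option linter.unusedSectionVars false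
set_option linter.unusedVariables false

lemma rho_bot {b : α} (hb : ∀ z, b ≤ z) : rho b = 0 := by
  have : {k : ℕ | ∃ s : Finset α,
      IsChain (· ≤ ·) (s : Set α) ∧ (s : Set α) ⊆ Set.Iic b ∧ s.card = k + 1} = {0} := by
    ext k
    simp only [Set.mem_setOf_eq, Set.mem_singleton_iff]
    constructor
    · rintro ⟨s, hc, hs, hcard⟩
      have hsub : s ⊆ {b} := by
        intro z hz
        have := hs hz
        simp only [Set.mem_Iic] at this
        simp [le_antisymm this (hb z)]
      have := Finset.card_le_card hsub
      simp only [Finset.card_singleton] at this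
      omega
    · rintro rfl
      exact ⟨{b}, by simp [IsChain], by simp, by simp⟩
  rw [rho, this, csSup_singleton]

variable {S : Set α} {m : ℕ} {b : α}

/-- All maximal chains of `Iic x` (for `x` in a graded lower set `S`) have
cardinality `rho x + 1`. -/
lemma MaxChainIn.card_Iic (hlow : IsLowerSet S) (hS : IsGradedSetOfRank S m)
    {x : α} (hx : x ∈ S) {e : Finset α} (he : MaxChainIn (Set.Iic x) e) :
    e.card = rho x + 1 := by
  haveI := Fintype.ofFinite α
  have hIicS : Set.Iic x ⊆ S := fun z hz => hlow hz hx
  -- a maximal chain in the upper part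
  obtain ⟨d, hd, -⟩ := exists_maxChainIn {z ∈ S | x ≤ z} {x}
    (by simp [hx]) (by simp [IsChain])
  -- constancy of cardinalities of maximal chains in `Iic x`
  have key : ∀ e' : Finset α, MaxChainIn (Set.Iic x) e' → e'.card + d.card = m + 2 := by
    intro e' he'
    obtain ⟨hmax, hcard⟩ := maxChainIn_glue_high hlow hx he' hd
    have := hS _ hmax.1 hmax.2.1 hmax.2.2
    omega
  -- `rho x` is attained by some chain
  set K := {k : ℕ | ∃ s : Finset α,
      IsChain (· ≤ ·) (s : Set α) ∧ (s : Set α) ⊆ Set.Iic x ∧ s.card = k + 1} with hK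
  have hKne : K.Nonempty := ⟨0, {x}, by simp [IsChain], by simp, by simp⟩
  have hKbdd : BddAbove K := by
    refine ⟨Fintype.card α, fun k hk => ?_⟩
    obtain ⟨s, -, -, hcard⟩ := hk
    have := s.card_le_univ
    omega
  have hmem : rho x ∈ K := Nat.sSup_mem hKne hKbdd
  obtain ⟨c, hcc, hcs, hccard⟩ := hmem
  obtain ⟨e', he', hce'⟩ := exists_maxChainIn (Set.Iic x) c hcs hcc
  have h1 : rho x + 1 ≤ e'.card := hccard ▸ Finset.card_le_card hce'
  have h2 : e'.card = e.card := by have := key e' he'; have := key e he; omega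
  -- and every maximal chain's card is at most `rho x + 1`
  have hxe : x ∈ e := he.top_mem
  have h3 : e.card - 1 ∈ K := by
    refine ⟨e, he.2.1, he.1, ?_⟩
    have : 1 ≤ e.card := Finset.card_pos.mpr ⟨x, hxe⟩
    omega
  have h4 : e.card - 1 ≤ rho x := le_csSup hKbdd h3
  omega

lemma exists_maxChainIn_Iic (x : α) : ∃ e, MaxChainIn (Set.Iic x) e :=
  (exists_maxChainIn (Set.Iic x) ∅ (by simp) (by simp)).imp (fun _ h => h.1)

/-- All maximal chains of `Icc x y` have cardinality `rho y + 1 - rho x`. -/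
lemma MaxChainIn.card_Icc (hlow : IsLowerSet S) (hS : IsGradedSetOfRank S m)
    {x y : α} (hx : x ∈ S) (hy : y ∈ S) (hxy : x ≤ y) {c : Finset α}
    (hc : MaxChainIn (Set.Icc x y) c) : c.card + rho x = rho y + 1 := by
  obtain ⟨e, he⟩ := exists_maxChainIn_Iic x
  obtain ⟨hmax, hcard⟩ := maxChainIn_glue_low hxy he hc
  have h1 := hmax.card_Iic hlow hS hy
  have h2 := he.card_Iic hlow hS hx
  omega

lemma exists_maxChainIn_Icc {x y : α} (hxy : x ≤ y) : ∃ c, MaxChainIn (Set.Icc x y) c :=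
  (exists_maxChainIn (Set.Icc x y) ∅ (by simp) (by simp)).imp (fun _ h => h.1)

lemma rho_mono_of_mem (hlow : IsLowerSet S) (hS : IsGradedSetOfRank S m)
    {x y : α} (hx : x ∈ S) (hy : y ∈ S) (hxy : x ≤ y) : rho x ≤ rho y := by
  obtain ⟨c, hc⟩ := exists_maxChainIn_Icc hxy
  have h1 := hc.card_Icc hlow hS hx hy hxy
  have h2 : 1 ≤ c.card := Finset.card_pos.mpr ⟨x, hc.left_mem hxy⟩
  omega

lemma rho_strict_mono_of_mem (hlow : IsLowerSet S) (hS : IsGradedSetOfRank S m)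
    {x y : α} (hx : x ∈ S) (hy : y ∈ S) (hxy : x < y) : rho x < rho y := by
  obtain ⟨c, hc⟩ := exists_maxChainIn_Icc hxy.le
  have h1 := hc.card_Icc hlow hS hx hy hxy.le
  have h2 : 1 < c.card := Finset.one_lt_card.mpr
    ⟨x, hc.left_mem hxy.le, y, hc.right_mem hxy.le, hxy.ne⟩
  omega

lemma chain_card_le_s2 (hS : IsGradedSetOfRank S m) {c : Finset α}
    (hc : IsChain (· ≤ ·) (c : Set α)) (hcS : (c : Set α) ⊆ S) : c.card ≤ m + 1 := by
  obtain ⟨t, ht, hct⟩ := exists_maxChainIn S c hcS hc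
  have := hS t ht.1 ht.2.1 ht.2.2
  have := Finset.card_le_card hct
  omega

lemma rho_le_rank (hlow : IsLowerSet S) (hS : IsGradedSetOfRank S m)
    {x : α} (hx : x ∈ S) : rho x ≤ m := by
  obtain ⟨e, he⟩ := exists_maxChainIn_Iic x
  have h1 := he.card_Iic hlow hS hx
  have h2 : e.card ≤ m + 1 := chain_card_le_s2 hS he.2.1 (fun z hz => hlow (he.1 hz) hx)
  omega

/-- Elements of maximal rank are exactly the maximal elements of `S`. -/
lemma rho_eq_rank_iff (hlow : IsLowerSet S) (hS : IsGradedSetOfRank S m)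
    {x : α} (hx : x ∈ S) : rho x = m ↔ ∀ z ∈ S, x ≤ z → z = x := by
  obtain ⟨d, hd, hxd0⟩ := exists_maxChainIn {z ∈ S | x ≤ z} {x}
    (by simp [hx]) (by simp [IsChain])
  have hxd : x ∈ d := hxd0 (Finset.mem_singleton_self x)
  obtain ⟨e, he⟩ := exists_maxChainIn_Iic x
  obtain ⟨hmax, hcard⟩ := maxChainIn_glue_high hlow hx he hd
  have h1 := hS _ hmax.1 hmax.2.1 hmax.2.2
  have h2 := he.card_Iic hlow hS hx
  constructor
  · intro hrho z hz hxz
    have hd1 : d.card = 1 := by omega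
    have hdx : d = {x} := Finset.eq_singleton_iff_unique_mem.mpr
      ⟨hxd, fun w hw => Finset.card_le_one.mp hd1.le w hw x hxd⟩
    have : z ∈ d := hd.mem_self ⟨hz, hxz⟩ (fun w hw => by
      rw [hdx, Finset.mem_singleton] at hw
      subst hw; exact .inr hxz)
    rw [hdx, Finset.mem_singleton] at this
    exact this
  · intro hmaxel
    have hdx : d ⊆ {x} := by
      intro w hw
      have := hd.1 hw
      simp only [Set.mem_setOf_eq, Finset.mem_coe] at this
      simp [hmaxel w this.1 this.2]
    have hd1 : d.card = 1 := by
      rw [Finset.Subset.antisymm hdx (Finset.singleton_subset_iff.mpr hxd),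
        Finset.card_singleton]
    omega

/-- In a graded set, a covering relation increases rank by exactly one. -/
lemma covBy_iff_rho (hlow : IsLowerSet S) (hS : IsGradedSetOfRank S m)
    {x y : α} (hx : x ∈ S) (hy : y ∈ S) (hxy : x < y) :
    x ⋖ y ↔ rho y = rho x + 1 := by
  obtain ⟨c, hc⟩ := exists_maxChainIn_Icc hxy.le
  have h1 := hc.card_Icc hlow hS hx hy hxy.le
  have hxc := hc.left_mem hxy.le
  have hyc := hc.right_mem hxy.le
  constructor
  · intro hcov
    have hsub : c ⊆ {x, y} := by
      intro z hz
      have hz' := hc.1 hz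
      simp only [Set.mem_Icc, Finset.mem_coe] at hz'
      rcases (covBy_iff_lt_and_eq_or_eq.mp hcov).2 z hz'.1 hz'.2 with h | h <;>
        simp [h]
    have h2 : c.card ≤ 2 := le_trans (Finset.card_le_card hsub)
      ((Finset.card_insert_le x {y}).trans (by simp))
    have h3 : 1 < c.card := Finset.one_lt_card.mpr ⟨x, hxc, y, hyc, hxy.ne⟩
    omega
  · intro hrho
    rw [covBy_iff_lt_and_eq_or_eq]
    refine ⟨hxy, fun z hxz hzy => ?_⟩
    have hcc : c = {x, y} := by
      have hsub : {x, y} ⊆ c := by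
        intro w hw
        simp only [Finset.mem_insert, Finset.mem_singleton] at hw
        rcases hw with rfl | rfl
        · exact hxc
        · exact hyc
      refine (Finset.eq_of_subset_of_card_le hsub ?_).symm
      rw [Finset.card_pair hxy.ne]
      omega
    have hzc : z ∈ c := hc.mem_self ⟨hxz, hzy⟩ (fun w hw => by
      rw [hcc, Finset.mem_insert, Finset.mem_singleton] at hw
      rcases hw with rfl | rfl
      · exact .inr hxz
      · exact .inl hzy)
    rw [hcc, Finset.mem_insert, Finset.mem_singleton] at hzc
    rcases hzc with rfl | rfl
    · exact .inl rfl
    · exact .inr rfl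

end Graded

section Graded2

variable [PartialOrder α] [Finite α] {S : Set α} {m : ℕ}
set_option linter.unusedSectionVars false

lemma graded_nonempty (hS : IsGradedSetOfRank S m) : S.Nonempty := by
  obtain ⟨t, ht, -⟩ := exists_maxChainIn S ∅ (by simp) (by simp)
  have h1 := hS t ht.1 ht.2.1 ht.2.2
  obtain ⟨a, ha⟩ : t.Nonempty := Finset.card_pos.mp (by omega)
  exact ⟨a, ht.1 ha⟩

/-- The up-set of a corank-one element consists of the element and its covers. -/
lemma upperSet_eq_insert_covers (hlow : IsLowerSet S) (hS : IsGradedSetOfRank S m)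
    {x : α} (hx : x ∈ S) (hrx : rho x + 1 = m) :
    {y | y ∈ S ∧ x ≤ y} = insert x {z | z ∈ S ∧ x ⋖ z} := by
  ext y
  simp only [Set.mem_setOf_eq, Set.mem_insert_iff]
  constructor
  · rintro ⟨hyS, hxy⟩
    rcases eq_or_lt_of_le hxy with rfl | hlt
    · exact .inl rfl
    · refine .inr ⟨hyS, ?_⟩
      rw [covBy_iff_rho hlow hS hx hyS hlt]
      have h1 := rho_strict_mono_of_mem hlow hS hx hyS hlt
      have h2 := rho_le_rank hlow hS hyS
      omega
  · rintro (rfl | ⟨hyS, hcov⟩)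
    · exact ⟨hx, le_rfl⟩
    · exact ⟨hyS, hcov.lt.le⟩

end Graded2

section Parity

variable [PartialOrder α] [Finite α]
set_option linter.unusedSectionVars false

lemma sum_neg_one_pow (T : Finset α) (g : α → ℕ) :
    ∑ y ∈ T, ((-1 : ℤ) ^ (g y)) =
      ((T.filter (fun y => Even (g y))).card : ℤ) -
        ((T.filter (fun y => ¬ Even (g y))).card : ℤ) := by
  rw [← Finset.sum_filter_add_sum_filter_not T (fun y => Even (g y))]
  have h1 : ∑ y ∈ T.filter (fun y => Even (g y)), ((-1 : ℤ) ^ (g y)) =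
      ((T.filter (fun y => Even (g y))).card : ℤ) := by
    rw [Finset.sum_congr rfl (fun y hy => ((Finset.mem_filter.mp hy).2).neg_one_pow)]
    simp
  have h2 : ∑ y ∈ T.filter (fun y => ¬ Even (g y)), ((-1 : ℤ) ^ (g y)) =
      -((T.filter (fun y => ¬ Even (g y))).card : ℤ) := by
    rw [Finset.sum_congr rfl (fun y hy =>
      (Nat.not_even_iff_odd.mp (Finset.mem_filter.mp hy).2).neg_one_pow)]
    simp
  rw [h1, h2]
  ring

lemma ncard_even_eq_ncard_odd_iff (T : Set α) :
    ({y ∈ T | Even (rho y)}.ncard = {y ∈ T | Odd (rho y)}.ncard) ↔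
      (∑ᶠ y ∈ T, ((-1 : ℤ) ^ rho y)) = 0 := by
  have hT : T.Finite := T.toFinite
  rw [finsum_mem_eq_finite_toFinset_sum _ hT, sum_neg_one_pow]
  have he : {y ∈ T | Even (rho y)} = ↑(hT.toFinset.filter (fun y => Even (rho y))) := by
    ext y; simp [Set.Finite.mem_toFinset]
  have ho : {y ∈ T | Odd (rho y)} = ↑(hT.toFinset.filter (fun y => ¬ Even (rho y))) := by
    ext y; simp [Set.Finite.mem_toFinset, Nat.not_even_iff_odd]
  rw [he, ho, Set.ncard_coe_finset, Set.ncard_coe_finset]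
  constructor
  · intro h; rw [h]; ring
  · intro h
    have := sub_eq_zero.mp h
    exact_mod_cast this

end Parity

section Transport

variable [PartialOrder α] [PartialOrder β]

lemma rho_orderEmbedding (f : α ↪o β) (a : α)
    (h : Set.Iic (f a) = f '' Set.Iic a) : rho (f a) = rho a := by
  unfold rho
  congr 1
  ext k
  simp only [Set.mem_setOf_eq]
  constructor
  · rintro ⟨s, hc, hsub, hcard⟩
    set t := s.preimage f (f.injective.injOn) with hd
    have himg : t.image f = s := by
      ext y
      simp only [Finset.mem_image, hd, Finset.mem_preimage]
      constructor
      · rintro ⟨x, hx, rfl⟩; exact hx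
      · intro hy
        have : y ∈ Set.Iic (f a) := hsub hy
        rw [h] at this
        obtain ⟨x, -, rfl⟩ := this
        exact ⟨x, hy, rfl⟩
    refine ⟨t, ?_, ?_, ?_⟩
    · intro x hx y hy hxy
      have hfx : f x ∈ s := by rw [Finset.mem_coe, hd, Finset.mem_preimage] at hx; exact hx
      have hfy : f y ∈ s := by rw [Finset.mem_coe, hd, Finset.mem_preimage] at hy; exact hy
      rcases hc hfx hfy (fun hcon => hxy (f.injective hcon)) with h' | h'
      · exact .inl (f.le_iff_le.mp h')
      · exact .inr (f.le_iff_le.mp h')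
    · intro x hx
      rw [Finset.mem_coe, hd, Finset.mem_preimage] at hx
      have : f x ∈ Set.Iic (f a) := hsub hx
      exact f.le_iff_le.mp this
    · rw [← hcard, ← himg, Finset.card_image_of_injective _ f.injective]
  · rintro ⟨s, hc, hsub, hcard⟩
    refine ⟨s.image f, ?_, ?_, ?_⟩
    · rw [Finset.coe_image]
      exact hc.image_of_map_rel _ _ _ (fun x y hxy => f.monotone hxy)
    · rw [Finset.coe_image, h]
      exact Set.image_mono hsub
    · rw [Finset.card_image_of_injective _ f.injective, hcard]

end Transport

section Aug

variable [PartialOrder α]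
set_option linter.unusedSectionVars false
set_option linter.unusedVariables false

/-- The order on `Option (Option α)` obtained by adding a new element `some none`
lying above (the lower closure of) `I` and a new global maximum `none`. -/
def augLE (I : Set α) : Option (Option α) → Option (Option α) → Prop
  | _, none => True
  | none, _ => False
  | some none, some none => True
  | some none, some (some _) => False
  | some (some a), some none => ∃ b ∈ I, a ≤ b
  | some (some a), some (some b) => a ≤ b

lemma augLE_le_top' (I : Set α) : ∀ x, augLE I x none := by
  rintro (_ | (_ | a)) <;> trivial

def augOrder (I : Set α) : PartialOrder (Option (Option α)) where
  le := augLE I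
  lt a b := augLE I a b ∧ ¬ augLE I b a
  lt_iff_le_not_ge _ _ := Iff.rfl
  le_refl x := by
    rcases x with _ | (_ | a)
    · trivial
    · trivial
    · exact le_refl a
  le_trans x y z hxy hyz := by
    rcases z with _ | (_ | c)
    · exact augLE_le_top' I x
    · rcases y with _ | (_ | b)
      · exact hyz.elim
      · rcases x with _ | (_ | a)
        · exact hxy.elim
        · trivial
        · exact hxy
      · rcases x with _ | (_ | a)
        · exact hxy.elim
        · exact hxy.elim
        · obtain ⟨w, hwI, hbw⟩ := hyz
          exact ⟨w, hwI, le_trans hxy hbw⟩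
    · rcases y with _ | (_ | b)
      · exact hyz.elim
      · exact hyz.elim
      · rcases x with _ | (_ | a)
        · exact hxy.elim
        · exact hxy.elim
        · exact le_trans hxy hyz
  le_antisymm x y hxy hyx := by
    rcases x with _ | (_ | a) <;> rcases y with _ | (_ | b)
    · rfl
    · exact hxy.elim
    · exact hxy.elim
    · exact hyx.elim
    · rfl
    · exact hxy.elim
    · exact hyx.elim
    · exact hyx.elim
    · exact congrArg _ (congrArg _ (le_antisymm hxy hyx))

variable {I : Set α}

lemma augLE_ss_ss {a b : α} : augLE I (some (some a)) (some (some b)) ↔ a ≤ b := Iff.rfl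

lemma augLE_le_top {x : Option (Option α)} : augLE I x none := augLE_le_top' I x

lemma augLE_ss_q (hI : IsLowerSet I) {a : α} :
    augLE I (some (some a)) (some none) ↔ a ∈ I :=
  ⟨fun ⟨b, hb, hab⟩ => hI hab hb, fun h => ⟨a, h, le_rfl⟩⟩

lemma augLE_q_iff {x : Option (Option α)} :
    augLE I x (some none) ↔ x = some none ∨ ∃ a, x = some (some a) ∧ ∃ b ∈ I, a ≤ b := by
  rcases x with _ | (_ | a)
  · simp [augLE]
  · simp [augLE]
  · simp only [augLE]
    constructor
    · intro h; exact .inr ⟨a, rfl, h⟩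
    · rintro (h | ⟨a', ha', h⟩)
      · exact absurd h (by simp)
      · obtain rfl : a = a' := by simpa using ha'
        exact h

lemma augLE_ss_iff {b : α} {x : Option (Option α)} :
    augLE I x (some (some b)) ↔ ∃ a, x = some (some a) ∧ a ≤ b := by
  rcases x with _ | (_ | a)
  · simp [augLE]
  · simp [augLE]
  · simp only [augLE]
    constructor
    · intro h; exact ⟨a, rfl, h⟩
    · rintro ⟨a', ha', h⟩
      obtain rfl : a = a' := by simpa using ha'
      exact h

lemma augLE_top_iff {x : Option (Option α)} : augLE I none x ↔ x = none := by
  rcases x with _ | (_ | a) <;> simp [augLE]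

lemma augLE_q_ss {a : α} : ¬ augLE I (some none) (some (some a)) := fun h => h

/-- The canonical embedding of `α` into the augmented poset. -/
def augEmb (I : Set α) :
    @OrderEmbedding α (Option (Option α)) _ (augOrder I).toPreorder.toLE :=
  { toFun := fun a => some (some a)
    inj' := fun a b h => by simpa using h
    map_rel_iff' := Iff.rfl }

end Aug

lemma hpow_aux (n : ℕ) : ((-1 : ℤ) ^ n) + ((-1 : ℤ) ^ (n + 1)) = 0 := by
  rw [pow_succ]; ring

section AugMain

variable [PartialOrder α] [Finite α]
set_option linter.unusedSectionVars false
set_option linter.unusedVariables false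

instance finiteOption {γ : Type} [Finite γ] : Finite (Option γ) := by
  haveI := Fintype.ofFinite γ
  exact Finite.of_fintype _

@[simp] lemma augEmb_apply {I : Set α} (a : α) : augEmb I a = some (some a) := rfl

lemma ss_inj : Function.Injective (fun a : α => (some (some a) : Option (Option α))) :=
  fun a b hab => by simpa using hab

lemma aug_graded {I : Set α} (hIlow : IsLowerSet I) {n : ℕ} (hn : 0 < n)
    (hgr : IsGradedOfRank α n) (hIgr : IsGradedSetOfRank I (n - 1)) :
    @IsGradedSetOfRank (Option (Option α)) (augOrder I) Set.univ (n + 1) := by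
  letI : PartialOrder (Option (Option α)) := augOrder I
  letI : LE (Option (Option α)) := (augOrder I).toLE
  letI : LT (Option (Option α)) := (augOrder I).toLT
  intro s hsub hchain hmaxp
  have hs : MaxChainIn (Set.univ : Set (Option (Option α))) s := ⟨hsub, hchain, hmaxp⟩
  have htop : (none : Option (Option α)) ∈ s :=
    hs.mem_self (Set.mem_univ _) (fun y hy => Or.inr augLE_le_top)
  set u : Finset α := s.preimage (fun a => some (some a)) (ss_inj.injOn) with hu
  have hmemu : ∀ a : α, a ∈ u ↔ some (some a) ∈ s := fun a => Finset.mem_preimage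
  have huchain : IsChain (· ≤ ·) (u : Set α) := by
    intro a ha b hb hab
    rw [Finset.mem_coe, hmemu] at ha hb
    rcases hchain ha hb (by simpa using hab) with h1 | h1
    · exact Or.inl h1
    · exact Or.inr h1
  by_cases hqs : (some none : Option (Option α)) ∈ s
  · -- the new coatom `q` belongs to the chain
    have husubI : (u : Set α) ⊆ I := by
      intro a ha
      rw [Finset.mem_coe, hmemu] at ha
      rcases hchain ha hqs (by simp) with h1 | h1
      · exact (augLE_ss_q hIlow).mp h1
      · exact absurd h1 augLE_q_ss
    have humax : ∀ t : Finset α, (t : Set α) ⊆ I → IsChain (· ≤ ·) (t : Set α) →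
        u ⊆ t → u = t := by
      intro t htI htc hut
      refine Finset.Subset.antisymm hut ?_
      intro w hw
      have hwI : w ∈ I := htI hw
      have hcomp : ∀ z ∈ s, (some (some w) : Option (Option α)) ≤ z ∨
          z ≤ some (some w) := by
        intro z hz
        rcases z with _ | (_ | a)
        · exact Or.inl augLE_le_top
        · exact Or.inl ((augLE_ss_q hIlow).mpr hwI)
        · have hat : a ∈ t := hut ((hmemu a).mpr hz)
          rcases eq_or_ne w a with rfl | hne
          · exact Or.inl le_rfl
          · exact (htc (Finset.mem_coe.mpr hw) (Finset.mem_coe.mpr hat) hne).imp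
              (fun h => h) (fun h => h)
      exact (hmemu w).mpr (hs.mem_self (Set.mem_univ _) hcomp)
    have hcard_u : u.card = (n - 1) + 1 := hIgr u husubI huchain humax
    have hdecomp : s = insert none
        (insert (some none) (u.image (fun a => some (some a)))) := by
      ext z
      simp only [Finset.mem_insert, Finset.mem_image]
      constructor
      · intro hz
        rcases z with _ | (_ | a)
        · exact Or.inl rfl
        · exact Or.inr (Or.inl rfl)
        · exact Or.inr (Or.inr ⟨a, (hmemu a).mpr hz, rfl⟩)
      · rintro (rfl | rfl | ⟨a, ha, rfl⟩)
        · exact htop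
        · exact hqs
        · exact (hmemu a).mp ha
    rw [hdecomp, Finset.card_insert_of_notMem (by simp),
      Finset.card_insert_of_notMem (by simp), Finset.card_image_of_injective _ ss_inj]
    omega
  · -- the new coatom is not in the chain
    have humax : ∀ t : Finset α, (t : Set α) ⊆ Set.univ → IsChain (· ≤ ·) (t : Set α) →
        u ⊆ t → u = t := by
      intro t htI htc hut
      refine Finset.Subset.antisymm hut ?_
      intro w hw
      have hcomp : ∀ z ∈ s, (some (some w) : Option (Option α)) ≤ z ∨
          z ≤ some (some w) := by
        intro z hz
        rcases z with _ | (_ | a)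
        · exact Or.inl augLE_le_top
        · exact absurd hz hqs
        · have hat : a ∈ t := hut ((hmemu a).mpr hz)
          rcases eq_or_ne w a with rfl | hne
          · exact Or.inl le_rfl
          · exact (htc (Finset.mem_coe.mpr hw) (Finset.mem_coe.mpr hat) hne).imp
              (fun h => h) (fun h => h)
      exact (hmemu w).mpr (hs.mem_self (Set.mem_univ _) hcomp)
    have hcard_u : u.card = n + 1 := hgr u (by simp) huchain humax
    have hdecomp : s = insert none (u.image (fun a => some (some a))) := by
      ext z
      simp only [Finset.mem_insert, Finset.mem_image]
      constructor
      · intro hz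
        rcases z with _ | (_ | a)
        · exact Or.inl rfl
        · exact absurd hz hqs
        · exact Or.inr ⟨a, (hmemu a).mpr hz, rfl⟩
      · rintro (rfl | ⟨a, ha, rfl⟩)
        · exact htop
        · exact (hmemu a).mp ha
    rw [hdecomp, Finset.card_insert_of_notMem (by simp),
      Finset.card_image_of_injective _ ss_inj]
    omega

lemma aug_rho_ss {I : Set α} (a : α) :
    @rho (Option (Option α)) (augOrder I) (some (some a)) = rho a := by
  letI : PartialOrder (Option (Option α)) := augOrder I
  have h : Set.Iic (augEmb I a) = (augEmb I) '' Set.Iic a := by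
    ext z
    simp only [Set.mem_Iic, Set.mem_image]
    constructor
    · intro hz
      rcases z with _ | (_ | w)
      · have h2 := augLE_top_iff.mp hz
        rw [augEmb_apply] at h2
        simp at h2
      · exact absurd hz augLE_q_ss
      · exact ⟨w, hz, rfl⟩
    · rintro ⟨w, hw, rfl⟩
      exact hw
  exact rho_orderEmbedding (augEmb I) a h

lemma aug_rho_top {I : Set α} {n : ℕ}
    (hQgr : @IsGradedSetOfRank (Option (Option α)) (augOrder I) Set.univ (n + 1)) :
    @rho (Option (Option α)) (augOrder I) none = n + 1 := by
  letI : PartialOrder (Option (Option α)) := augOrder I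
  letI : LE (Option (Option α)) := (augOrder I).toLE
  letI : LT (Option (Option α)) := (augOrder I).toLT
  rw [rho_eq_rank_iff isLowerSet_univ hQgr (Set.mem_univ _)]
  intro z hz htz
  exact augLE_top_iff.mp htz

lemma aug_rho_q {I : Set α} (hIlow : IsLowerSet I) {n : ℕ} (hn : 0 < n)
    (hIgr : IsGradedSetOfRank I (n - 1))
    (hQgr : @IsGradedSetOfRank (Option (Option α)) (augOrder I) Set.univ (n + 1)) :
    @rho (Option (Option α)) (augOrder I) (some none) = n := by
  letI : PartialOrder (Option (Option α)) := augOrder I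
  letI : LE (Option (Option α)) := (augOrder I).toLE
  letI : LT (Option (Option α)) := (augOrder I).toLT
  obtain ⟨t0, ht0, -⟩ := exists_maxChainIn I ∅ (by simp) (by simp)
  have ht0card : t0.card = (n - 1) + 1 := hIgr _ ht0.1 ht0.2.1 ht0.2.2
  set e : Finset (Option (Option α)) :=
    insert (some none) (t0.image (fun a => some (some a))) with he
  have hesub : (e : Set (Option (Option α))) ⊆ Set.Iic (some none) := by
    intro z hz
    rw [Finset.mem_coe, he, Finset.mem_insert] at hz
    rcases hz with rfl | hz
    · exact Set.mem_Iic.mpr le_rfl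
    · obtain ⟨a, ha, rfl⟩ := Finset.mem_image.mp hz
      exact Set.mem_Iic.mpr ((augLE_ss_q hIlow).mpr (ht0.1 ha))
  have hechain : IsChain (· ≤ ·) (e : Set (Option (Option α))) := by
    intro z1 h1 z2 h2 hne
    rw [Finset.mem_coe, he, Finset.mem_insert] at h1 h2
    rcases h1 with rfl | h1 <;> rcases h2 with rfl | h2
    · exact absurd rfl hne
    · obtain ⟨a, ha, rfl⟩ := Finset.mem_image.mp h2
      exact Or.inr ((augLE_ss_q hIlow).mpr (ht0.1 ha))
    · obtain ⟨a, ha, rfl⟩ := Finset.mem_image.mp h1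
      exact Or.inl ((augLE_ss_q hIlow).mpr (ht0.1 ha))
    · obtain ⟨a, ha, rfl⟩ := Finset.mem_image.mp h1
      obtain ⟨b, hb, rfl⟩ := Finset.mem_image.mp h2
      rcases ht0.2.1 (Finset.mem_coe.mpr ha) (Finset.mem_coe.mpr hb)
        (by simpa using hne) with h | h
      · exact Or.inl h
      · exact Or.inr h
  have hemax : MaxChainIn (Set.Iic (some none)) e := by
    refine ⟨hesub, hechain, ?_⟩
    intro t ht htc het
    refine Finset.Subset.antisymm het ?_
    intro z hz
    have hzq : z ≤ some none := ht hz
    rcases augLE_q_iff.mp hzq with rfl | ⟨a, rfl, b, hbI, hab⟩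
    · rw [he]
      exact Finset.mem_insert_self _ _
    · have haI : a ∈ I := hIlow hab hbI
      have hat0 : a ∈ t0 := by
        have heq : t0 = insert a t0 := by
          refine ht0.2.2 _ ?_ ?_ (Finset.subset_insert a t0)
          · rw [Finset.coe_insert]
            exact Set.insert_subset haI ht0.1
          · rw [Finset.coe_insert]
            refine ht0.2.1.insert ?_
            intro b2 hb2 hne2
            have h1 : (some (some a) : Option (Option α)) ∈ t := hz
            have h2 : (some (some b2) : Option (Option α)) ∈ t := by
              refine het ?_
              rw [he]
              exact Finset.mem_insert_of_mem (Finset.mem_image_of_mem _ hb2)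
            rcases htc h1 h2 (by simpa using hne2) with h | h
            · exact Or.inl h
            · exact Or.inr h
        rw [heq]
        exact Finset.mem_insert_self a t0
      rw [he]
      exact Finset.mem_insert_of_mem (Finset.mem_image_of_mem _ hat0)
  have hecard := hemax.card_Iic isLowerSet_univ hQgr (Set.mem_univ _)
  rw [he, Finset.card_insert_of_notMem (by simp),
    Finset.card_image_of_injective _ ss_inj] at hecard
  omega

end AugMain

section AugBal

variable [PartialOrder α] [Finite α]
set_option linter.unusedSectionVars false
set_option linter.unusedVariables false

lemma aug_balanced {I : Set α} (hIlow : IsLowerSet I) {n : ℕ}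
    (hbal : BalancedIntervalsIn (Set.univ : Set α))
    (hcrit1 : ∀ x ∈ I,
      (∑ᶠ y ∈ {y | y ∈ I ∧ x ≤ y}, ((-1 : ℤ) ^ rho y)) = (-1) ^ (n + 1) ∧
      (∑ᶠ y ∈ Set.Ici x, ((-1 : ℤ) ^ rho y)) = 0)
    (hcrit2 : ∀ x ∉ I, (∑ᶠ y ∈ Set.Ici x, ((-1 : ℤ) ^ rho y)) = (-1) ^ n)
    (hrho_q : @rho _ (augOrder I) (some none) = n)
    (hrho_top : @rho _ (augOrder I) none = n + 1) :
    @BalancedIntervalsIn (Option (Option α)) (augOrder I) Set.univ := by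
  letI : PartialOrder (Option (Option α)) := augOrder I
  letI : LE (Option (Option α)) := (augOrder I).toLE
  letI : LT (Option (Option α)) := (augOrder I).toLT
  have himg : ∀ A : Set α,
      (∑ᶠ z ∈ (fun a => (some (some a) : Option (Option α))) '' A, ((-1 : ℤ) ^ rho z)) =
        ∑ᶠ y ∈ A, ((-1 : ℤ) ^ rho y) := by
    intro A
    rw [finsum_mem_image ss_inj.injOn]
    exact finsum_mem_congr rfl (fun y _ => by rw [aug_rho_ss])
  have hdisj2 : ∀ A : Set α, Disjoint
      ((fun a => (some (some a) : Option (Option α))) '' A)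
      ({some none, none} : Set (Option (Option α))) := by
    intro A
    rw [Set.disjoint_left]
    rintro z ⟨a, -, rfl⟩ hz
    simp at hz
  have hdisj1 : ∀ A : Set α, Disjoint
      ((fun a => (some (some a) : Option (Option α))) '' A)
      ({none} : Set (Option (Option α))) := by
    intro A
    rw [Set.disjoint_left]
    rintro z ⟨a, -, rfl⟩ hz
    simp at hz
  have hdisjq : ∀ A : Set α, Disjoint
      ((fun a => (some (some a) : Option (Option α))) '' A)
      ({some none} : Set (Option (Option α))) := by
    intro A
    rw [Set.disjoint_left]
    rintro z ⟨a, -, rfl⟩ hz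
    simp at hz
  have hqtop : ((-1 : ℤ) ^ rho (some none : Option (Option α))) +
      ((-1 : ℤ) ^ rho (none : Option (Option α))) = 0 := by
    rw [hrho_q, hrho_top, pow_succ]; ring
  have hsum_qtop : (∑ᶠ z ∈ ({some none, none} : Set (Option (Option α))),
      ((-1 : ℤ) ^ rho z)) = 0 := by
    rw [Set.insert_eq, finsum_mem_union (by simp) (Set.toFinite _) (Set.toFinite _),
      finsum_mem_singleton, finsum_mem_singleton]
    exact hqtop
  intro s hs t ht hst
  rw [ncard_even_eq_ncard_odd_iff]
  rcases t with _ | (_ | y)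
  · -- t = top
    rcases s with _ | (_ | x)
    · exact absurd hst (lt_irrefl _)
    · -- s = q
      have hIcc : Set.Icc (some none : Option (Option α)) none =
          {some none, none} := by
        ext z
        simp only [Set.mem_Icc, Set.mem_insert_iff, Set.mem_singleton_iff]
        constructor
        · rintro ⟨h1, -⟩
          rcases z with _ | (_ | a)
          · exact Or.inr rfl
          · exact Or.inl rfl
          · exact absurd h1 augLE_q_ss
        · rintro (rfl | rfl)
          · exact ⟨le_rfl, augLE_le_top⟩
          · exact ⟨augLE_le_top, le_rfl⟩
      rw [hIcc]
      exact hsum_qtop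
    · -- s = some (some x)
      by_cases hxI : x ∈ I
      · have hIcc : Set.Icc (some (some x) : Option (Option α)) none =
            ((fun a => (some (some a) : Option (Option α))) '' Set.Ici x) ∪
              {some none, none} := by
          ext z
          simp only [Set.mem_Icc, Set.mem_union, Set.mem_image, Set.mem_Ici,
            Set.mem_insert_iff, Set.mem_singleton_iff]
          constructor
          · rintro ⟨h1, -⟩
            rcases z with _ | (_ | a)
            · exact Or.inr (Or.inr rfl)
            · exact Or.inr (Or.inl rfl)
            · exact Or.inl ⟨a, h1, rfl⟩
          · rintro (⟨a, ha, rfl⟩ | rfl | rfl)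
            · exact ⟨ha, augLE_le_top⟩
            · exact ⟨(augLE_ss_q hIlow).mpr hxI, augLE_le_top⟩
            · exact ⟨augLE_le_top, le_rfl⟩
        rw [hIcc, finsum_mem_union (hdisj2 _) (Set.toFinite _) (Set.toFinite _),
          himg, (hcrit1 x hxI).2, hsum_qtop]
        ring
      · have hIcc : Set.Icc (some (some x) : Option (Option α)) none =
            ((fun a => (some (some a) : Option (Option α))) '' Set.Ici x) ∪
              {none} := by
          ext z
          simp only [Set.mem_Icc, Set.mem_union, Set.mem_image, Set.mem_Ici,
            Set.mem_singleton_iff]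
          constructor
          · rintro ⟨h1, -⟩
            rcases z with _ | (_ | a)
            · exact Or.inr rfl
            · exact absurd ((augLE_ss_q hIlow).mp h1) hxI
            · exact Or.inl ⟨a, h1, rfl⟩
          · rintro (⟨a, ha, rfl⟩ | rfl)
            · exact ⟨ha, augLE_le_top⟩
            · exact ⟨augLE_le_top, le_rfl⟩
        rw [hIcc, finsum_mem_union (hdisj1 _) (Set.toFinite _) (Set.toFinite _),
          himg, (hcrit2 x hxI), finsum_mem_singleton, hrho_top]
        exact hpow_aux n
  · -- t = q
    have hsq : s ≤ some none := hst.le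
    rcases augLE_q_iff.mp hsq with heq | ⟨x, rfl, b, hbI, hxb⟩
    · rw [heq] at hst
      exact absurd hst (lt_irrefl _)
    · have hxI : x ∈ I := hIlow hxb hbI
      have hIcc : Set.Icc (some (some x) : Option (Option α)) (some none) =
          ((fun a => (some (some a) : Option (Option α))) '' {y | y ∈ I ∧ x ≤ y}) ∪
            {some none} := by
        ext z
        simp only [Set.mem_Icc, Set.mem_union, Set.mem_image, Set.mem_setOf_eq,
          Set.mem_singleton_iff]
        constructor
        · rintro ⟨h1, h2⟩
          rcases z with _ | (_ | a)
          · have := augLE_top_iff.mp h2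
            exact absurd this (by simp)
          · exact Or.inr rfl
          · exact Or.inl ⟨a, ⟨(augLE_ss_q hIlow).mp h2, h1⟩, rfl⟩
        · rintro (⟨a, ⟨haI, hxa⟩, rfl⟩ | rfl)
          · exact ⟨hxa, (augLE_ss_q hIlow).mpr haI⟩
          · exact ⟨(augLE_ss_q hIlow).mpr hxI, le_rfl⟩
      rw [hIcc, finsum_mem_union (hdisjq _) (Set.toFinite _) (Set.toFinite _),
        himg, (hcrit1 x hxI).1, finsum_mem_singleton, hrho_q]
      rw [pow_succ]; ring
  · -- t = some (some y)
    have hsy : s ≤ some (some y) := hst.le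
    obtain ⟨x, rfl, hxy⟩ := augLE_ss_iff.mp hsy
    have hxylt : x < y := lt_of_le_of_ne hxy (fun hh => hst.ne (by rw [hh]))
    have hIcc : Set.Icc (some (some x) : Option (Option α)) (some (some y)) =
        (fun a => (some (some a) : Option (Option α))) '' Set.Icc x y := by
      ext z
      simp only [Set.mem_Icc, Set.mem_image]
      constructor
      · rintro ⟨h1, h2⟩
        obtain ⟨a, rfl, hay⟩ := augLE_ss_iff.mp h2
        exact ⟨a, ⟨h1, hay⟩, rfl⟩
      · rintro ⟨a, ⟨hxa, hay⟩, rfl⟩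
        exact ⟨hxa, hay⟩
    rw [hIcc, himg]
    exact (ncard_even_eq_ncard_odd_iff _).mp
      (hbal x (Set.mem_univ _) y (Set.mem_univ _) hxylt)

end AugBal

section Backward

variable [PartialOrder α] [Finite α]
set_option linter.unusedSectionVars false
set_option linter.unusedVariables false

lemma isNearEulerian_of_crit [OrderBot α] {n : ℕ}
    (h : IsLowerEulerianOfRank α n) (hn : 0 < n) {I : Set α}
    (hcrit : NearEulerianCrit α n I) : IsNearEulerianOfRank α n := by
  obtain ⟨hIlow, hIgr, hc1, hc2⟩ := hcrit
  obtain ⟨-, hgr, hbal⟩ := h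
  have hIne : I.Nonempty := graded_nonempty hIgr
  have hbotI : (⊥ : α) ∈ I := hIlow bot_le hIne.choose_spec
  have hQgr := aug_graded hIlow hn hgr hIgr
  have hrho_q := aug_rho_q hIlow hn hIgr hQgr
  have hrho_top := aug_rho_top hQgr
  have hQbal := aug_balanced hIlow hbal hc1 hc2 hrho_q hrho_top
  letI : PartialOrder (Option (Option α)) := augOrder I
  letI : LE (Option (Option α)) := (augOrder I).toLE
  letI : LT (Option (Option α)) := (augOrder I).toLT
  have hiso : α ≃o {x : Option (Option α) // x ≠ some none ∧ x ≠ none} := by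
    refine
      { toFun := fun a => ⟨some (some a), by simp, by simp⟩
        invFun := fun x =>
          match x with
          | ⟨some (some a), _⟩ => a
          | ⟨some none, h⟩ => absurd rfl h.1
          | ⟨none, h⟩ => absurd rfl h.2
        left_inv := fun a => rfl
        right_inv := ?_
        map_rel_iff' := ?_ }
    · rintro ⟨z, hz⟩
      rcases z with _ | (_ | a)
      · exact absurd rfl hz.2
      · exact absurd rfl hz.1
      · rfl
    · intro a b
      exact Iff.rfl
  refine ⟨Option (Option α), augOrder I, inferInstance, some none, none,
    ⟨⟨some (some ⊥), ?_⟩, ⟨none, fun z => augLE_le_top⟩, hQgr, hQbal⟩,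
    fun z => augLE_le_top, hrho_q, by simp, ⟨hiso⟩⟩
  intro z
  rcases z with _ | (_ | a)
  · exact augLE_le_top
  · exact (augLE_ss_q hIlow).mpr hbotI
  · exact bot_le

end Backward

section Forward

variable [PartialOrder α] [Finite α]
set_option linter.unusedSectionVars false
set_option linter.unusedVariables false

lemma finsum_mem_const' {s : Set α} (hs : s.Finite) (c : ℤ) :
    (∑ᶠ i ∈ s, c) = (s.ncard : ℤ) * c := by
  rw [finsum_mem_eq_finite_toFinset_sum _ hs, Finset.sum_const, nsmul_eq_mul]
  congr 2
  exact (Set.ncard_eq_toFinset_card s hs).symm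

lemma crit_of_isNearEulerian [OrderBot α] {n : ℕ}
    (h : IsLowerEulerianOfRank α n) (hne : IsNearEulerianOfRank α n) :
    0 < n ∧ ∃ I : Set α, NearEulerianCrit α n I := by
  classical
  obtain ⟨Q, instQ, finQ, q, top, hEul, htop, hrq, hqt, ⟨e⟩⟩ := hne
  obtain ⟨⟨b, hb⟩, -, hQgr, hQbal⟩ := hEul
  have hrho_b : rho b = 0 := rho_bot hb
  have hrho_le : ∀ z : Q, rho z ≤ n + 1 :=
    fun z => rho_le_rank isLowerSet_univ hQgr (Set.mem_univ _)
  have hq_top : ∀ z : Q, q < z → z = top := by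
    intro z hqz
    have h1 : rho q < rho z :=
      rho_strict_mono_of_mem isLowerSet_univ hQgr (Set.mem_univ _) (Set.mem_univ _) hqz
    have h2 : rho z = n + 1 := by have := hrho_le z; omega
    have h3 := (rho_eq_rank_iff isLowerSet_univ hQgr (Set.mem_univ _)).mp h2
    exact (h3 top (Set.mem_univ _) (htop z)).symm
  have hq_lt_top : q < top := lt_of_le_of_ne (htop q) hqt
  -- n is positive
  have hn : 0 < n := by
    by_contra hcon
    push_neg at hcon
    interval_cases n
    have hbq : b = q := by
      by_contra hbq
      have := rho_strict_mono_of_mem isLowerSet_univ hQgr (Set.mem_univ _)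
        (Set.mem_univ _) (lt_of_le_of_ne (hb q) hbq)
      omega
    have hz := e ⊥
    have h1 : q < (hz : Q) := lt_of_le_of_ne (hbq ▸ hb (hz : Q)) (Ne.symm hz.2.1)
    exact hz.2.2 (hq_top _ h1)
  -- rank of the subtype elements agrees with the rank in `Q`
  have hIic : ∀ u : {x : Q // x ≠ q ∧ x ≠ top},
      Set.Iic (u : Q) = Subtype.val '' Set.Iic u := by
    intro u
    ext z
    constructor
    · intro hz
      rw [Set.mem_Iic] at hz
      have hzt : z ≠ top := by
        rintro rfl
        exact u.2.2 (le_antisymm (htop _) hz)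
      have hzq : z ≠ q := by
        rintro rfl
        exact u.2.2 (hq_top _ (lt_of_le_of_ne hz (Ne.symm u.2.1)))
      exact ⟨⟨z, hzq, hzt⟩, Subtype.coe_le_coe.mp hz, rfl⟩
    · rintro ⟨w, hw, rfl⟩
      exact Set.mem_Iic.mpr (Subtype.coe_le_coe.mpr hw)
  have hrho_sub : ∀ u : {x : Q // x ≠ q ∧ x ≠ top}, rho (u : Q) = rho u :=
    fun u => rho_orderEmbedding (OrderEmbedding.subtype _) u (hIic u)
  set ec : α → Q := fun a => ((e a : {x : Q // x ≠ q ∧ x ≠ top}) : Q) with hec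
  have hecle : ∀ a c : α, ec a ≤ ec c ↔ a ≤ c := by
    intro a c
    rw [hec]
    simp only
    rw [Subtype.coe_le_coe]
    exact e.le_iff_le
  have hecinj : Function.Injective ec := by
    intro a c hac
    exact e.injective (Subtype.val_injective hac)
  have hrho_e : ∀ a : α, rho (ec a) = rho a := by
    intro a
    rw [hrho_sub (e a)]
    exact rho_orderEmbedding e.toOrderEmbedding a (e.image_Iic a).symm
  have hec_ne_q : ∀ a : α, ec a ≠ q := fun a => (e a).2.1
  have hec_ne_top : ∀ a : α, ec a ≠ top := fun a => (e a).2.2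
  have hec_surj : ∀ z : Q, z ≠ q → z ≠ top → ∃ a, ec a = z := by
    intro z h1 h2
    refine ⟨e.symm ⟨z, h1, h2⟩, ?_⟩
    rw [hec]
    simp
  -- the candidate ideal
  set I : Set α := {x | ec x < q} with hI
  have hIlow : IsLowerSet I := by
    intro a c hca haI
    exact lt_of_le_of_lt ((hecle c a).mpr hca) haI
  -- membership characterizations
  have hle_q_iff : ∀ a : α, ec a ≤ q ↔ a ∈ I :=
    fun a => ⟨fun hle => lt_of_le_of_ne hle (hec_ne_q a), fun h => h.le⟩
  -- gradedness of I
  have hIgr : IsGradedSetOfRank I (n - 1) := by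
    intro s hsubI hchain hmax
    set t : Finset Q := insert q (s.image ec) with ht
    have htsub : (t : Set Q) ⊆ Set.Icc b q := by
      intro z hz
      rw [Finset.mem_coe, ht, Finset.mem_insert] at hz
      rcases hz with rfl | hz
      · exact ⟨hb z, le_rfl⟩
      · obtain ⟨a, ha, rfl⟩ := Finset.mem_image.mp hz
        exact ⟨hb _, (hsubI ha).le⟩
    have htchain : IsChain (· ≤ ·) (t : Set Q) := by
      intro z1 h1 z2 h2 hne12
      rw [Finset.mem_coe, ht, Finset.mem_insert] at h1 h2
      rcases h1 with rfl | h1 <;> rcases h2 with rfl | h2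
      · exact absurd rfl hne12
      · obtain ⟨a, ha, rfl⟩ := Finset.mem_image.mp h2
        exact Or.inr (hsubI ha).le
      · obtain ⟨a, ha, rfl⟩ := Finset.mem_image.mp h1
        exact Or.inl (hsubI ha).le
      · obtain ⟨a, ha, rfl⟩ := Finset.mem_image.mp h1
        obtain ⟨c, hc, rfl⟩ := Finset.mem_image.mp h2
        have hac : a ≠ c := fun hh => hne12 (by rw [hh])
        rcases hchain (Finset.mem_coe.mpr ha) (Finset.mem_coe.mpr hc) hac with hle | hle
        · exact Or.inl ((hecle a c).mpr hle)
        · exact Or.inr ((hecle c a).mpr hle)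
    have htmax : MaxChainIn (Set.Icc b q) t := by
      refine ⟨htsub, htchain, ?_⟩
      intro t' ht' htc' htt'
      refine Finset.Subset.antisymm htt' ?_
      intro z hz
      obtain ⟨hbz, hzq⟩ := ht' hz
      rcases eq_or_lt_of_le hzq with rfl | hzlt
      · rw [ht]
        exact Finset.mem_insert_self _ _
      · have hzt : z ≠ top := by
          rintro rfl
          exact absurd (lt_trans hzlt hq_lt_top) (lt_irrefl _)
        obtain ⟨a, rfl⟩ := hec_surj z hzlt.ne hzt
        have haI : a ∈ I := hzlt
        have has : a ∈ s := by
          have heq : s = insert a s := by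
            refine hmax _ ?_ ?_ (Finset.subset_insert a s)
            · rw [Finset.coe_insert]
              exact Set.insert_subset haI hsubI
            · rw [Finset.coe_insert]
              refine hchain.insert ?_
              intro w hw hnew
              have h1 : ec w ∈ t' := htt' (by
                rw [ht]
                exact Finset.mem_insert_of_mem (Finset.mem_image_of_mem _ hw))
              have hnew' : ec a ≠ ec w := fun hh => hnew (hecinj hh)
              rcases htc' hz h1 hnew' with hle | hle
              · exact Or.inl ((hecle a w).mp hle)
              · exact Or.inr ((hecle w a).mp hle)
          rw [heq]
          exact Finset.mem_insert_self a s
        rw [ht]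
        exact Finset.mem_insert_of_mem (Finset.mem_image_of_mem _ has)
    have hcard := htmax.card_Icc isLowerSet_univ hQgr (Set.mem_univ _) (Set.mem_univ _)
      (hb q)
    rw [ht, Finset.card_insert_of_notMem (by
        intro hcon
        obtain ⟨a, -, ha⟩ := Finset.mem_image.mp hcon
        exact hec_ne_q a ha),
      Finset.card_image_of_injective _ hecinj, hrho_b, hrq] at hcard
    omega
  -- sums in Q
  have hQsum : ∀ z w : Q, z < w → (∑ᶠ y ∈ Set.Icc z w, ((-1 : ℤ) ^ rho y)) = 0 :=
    fun z w hzw => (ncard_even_eq_ncard_odd_iff _).mp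
      (hQbal z (Set.mem_univ _) w (Set.mem_univ _) hzw)
  have himgsum : ∀ A : Set α,
      (∑ᶠ z ∈ ec '' A, ((-1 : ℤ) ^ rho z)) = ∑ᶠ y ∈ A, ((-1 : ℤ) ^ rho y) := by
    intro A
    rw [finsum_mem_image hecinj.injOn]
    exact finsum_mem_congr rfl (fun y _ => by rw [hrho_e])
  have hrho_topQ : rho top = n + 1 := by
    rw [rho_eq_rank_iff isLowerSet_univ hQgr (Set.mem_univ _)]
    intro z hz hlez
    exact le_antisymm (htop z) hlez
  have hdisj : ∀ (A : Set α) (B : Set Q), (∀ z ∈ B, z = q ∨ z = top) →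
      Disjoint (ec '' A) B := by
    intro A B hB
    rw [Set.disjoint_left]
    rintro z ⟨a, -, rfl⟩ hzB
    rcases hB _ hzB with hh | hh
    · exact hec_ne_q a hh
    · exact hec_ne_top a hh
  have hqtop_sum : (∑ᶠ z ∈ ({q, top} : Set Q), ((-1 : ℤ) ^ rho z)) =
      ((-1 : ℤ) ^ n) + ((-1 : ℤ) ^ (n + 1)) := by
    rw [Set.insert_eq, finsum_mem_union (by simp [hqt]) (Set.toFinite _) (Set.toFinite _),
      finsum_mem_singleton, finsum_mem_singleton, hrq, hrho_topQ]
  -- the Ici sums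
  have hsum_Ici : ∀ x : α, (x ∈ I → (∑ᶠ y ∈ Set.Ici x, ((-1 : ℤ) ^ rho y)) = 0) ∧
      (x ∉ I → (∑ᶠ y ∈ Set.Ici x, ((-1 : ℤ) ^ rho y)) = (-1) ^ n) := by
    intro x
    have hlt : ec x < top := lt_of_le_of_ne (htop _) (hec_ne_top x)
    have h0 := hQsum _ _ hlt
    constructor
    · intro hxI
      have hIcc : Set.Icc (ec x) top = (ec '' Set.Ici x) ∪ {q, top} := by
        ext z
        simp only [Set.mem_Icc, Set.mem_union, Set.mem_image, Set.mem_Ici,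
          Set.mem_insert_iff, Set.mem_singleton_iff]
        constructor
        · rintro ⟨h1, h2⟩
          by_cases hzq : z = q
          · exact Or.inr (Or.inl hzq)
          · by_cases hzt : z = top
            · exact Or.inr (Or.inr hzt)
            · obtain ⟨a, rfl⟩ := hec_surj z hzq hzt
              exact Or.inl ⟨a, (hecle x a).mp h1, rfl⟩
        · rintro (⟨a, ha, rfl⟩ | rfl | rfl)
          · exact ⟨(hecle x a).mpr ha, htop _⟩
          · exact ⟨hxI.le, htop _⟩
          · exact ⟨htop _, le_rfl⟩
      rw [hIcc, finsum_mem_union (hdisj _ _ (by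
          rintro z (rfl | rfl)
          · exact Or.inl rfl
          · exact Or.inr rfl)) (Set.toFinite _) (Set.toFinite _),
        himgsum, hqtop_sum] at h0
      have : ((-1 : ℤ) ^ n) + ((-1 : ℤ) ^ (n + 1)) = 0 := hpow_aux n
      linarith
    · intro hxI
      have hIcc : Set.Icc (ec x) top = (ec '' Set.Ici x) ∪ {top} := by
        ext z
        simp only [Set.mem_Icc, Set.mem_union, Set.mem_image, Set.mem_Ici,
          Set.mem_singleton_iff]
        constructor
        · rintro ⟨h1, h2⟩
          by_cases hzt : z = top
          · exact Or.inr hzt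
          · have hzq : z ≠ q := by
              rintro rfl
              exact hxI ((hle_q_iff x).mp h1)
            obtain ⟨a, rfl⟩ := hec_surj z hzq hzt
            exact Or.inl ⟨a, (hecle x a).mp h1, rfl⟩
        · rintro (⟨a, ha, rfl⟩ | rfl)
          · exact ⟨(hecle x a).mpr ha, htop _⟩
          · exact ⟨htop _, le_rfl⟩
      rw [hIcc, finsum_mem_union (hdisj _ ({top} : Set Q) (fun z hz => Or.inr hz))
        (Set.toFinite _) (Set.toFinite _), himgsum, finsum_mem_singleton,
        hrho_topQ] at h0
      have : ((-1 : ℤ) ^ n) + ((-1 : ℤ) ^ (n + 1)) = 0 := hpow_aux n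
      linarith
  refine ⟨hn, I, hIlow, hIgr, ?_, fun x hx => (hsum_Ici x).2 hx⟩
  intro x hxI
  refine ⟨?_, (hsum_Ici x).1 hxI⟩
  -- the sum over I ∩ [x, ∞)
  have h0 := hQsum _ _ (hxI : ec x < q)
  have hIcc : Set.Icc (ec x) q = (ec '' {y | y ∈ I ∧ x ≤ y}) ∪ {q} := by
    ext z
    simp only [Set.mem_Icc, Set.mem_union, Set.mem_image, Set.mem_setOf_eq,
      Set.mem_singleton_iff]
    constructor
    · rintro ⟨h1, h2⟩
      by_cases hzq : z = q
      · exact Or.inr hzq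
      · have hzlt : z < q := lt_of_le_of_ne h2 hzq
        have hzt : z ≠ top := by
          rintro rfl
          exact absurd (lt_trans hzlt hq_lt_top) (lt_irrefl _)
        obtain ⟨a, rfl⟩ := hec_surj z hzq hzt
        exact Or.inl ⟨a, ⟨hzlt, (hecle x a).mp h1⟩, rfl⟩
    · rintro (⟨a, ⟨haI, hxa⟩, rfl⟩ | rfl)
      · exact ⟨(hecle x a).mpr hxa, haI.le⟩
      · exact ⟨hxI.le, le_rfl⟩
  rw [hIcc, finsum_mem_union (hdisj _ ({q} : Set Q) (fun z hz => Or.inl hz))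
    (Set.toFinite _) (Set.toFinite _), himgsum, finsum_mem_singleton, hrq] at h0
  have : ((-1 : ℤ) ^ n) + ((-1 : ℤ) ^ (n + 1)) = 0 := hpow_aux n
  linarith

end Forward

section Boundary

variable [PartialOrder α] [Finite α]
set_option linter.unusedSectionVars false
set_option linter.unusedVariables false

lemma crit_eq_boundary {n : ℕ}
    (h : IsLowerEulerianOfRank α n) (hn : 0 < n) {I : Set α}
    (hcrit : NearEulerianCrit α n I) : I = boundary α n := by
  obtain ⟨hIlow, hIgr, hc1, hc2⟩ := hcrit
  obtain ⟨-, hgr, hbal⟩ := h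
  have hIci_eq : ∀ x : α, Set.Ici x = {y | y ∈ Set.univ ∧ x ≤ y} := by
    intro x; ext y; simp
  have hcov : ∀ x : α, rho x + 1 = n →
      (∑ᶠ y ∈ Set.Ici x, ((-1 : ℤ) ^ rho y)) =
        ((-1 : ℤ) ^ rho x) +
          (({z | z ∈ Set.univ ∧ x ⋖ z}.ncard : ℤ)) * ((-1 : ℤ) ^ n) := by
    intro x hx
    have hdec := upperSet_eq_insert_covers isLowerSet_univ hgr (Set.mem_univ x) hx
    have hdisj : Disjoint ({x} : Set α) {z | z ∈ Set.univ ∧ x ⋖ z} := by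
      rw [Set.disjoint_left]
      rintro z hz ⟨-, hcovz⟩
      rw [Set.mem_singleton_iff] at hz
      subst hz
      exact absurd hcovz.lt (lt_irrefl _)
    rw [hIci_eq x, hdec, Set.insert_eq,
      finsum_mem_union hdisj (Set.toFinite _) (Set.toFinite _), finsum_mem_singleton]
    congr 1
    have hval : ∀ z ∈ {z | z ∈ Set.univ ∧ x ⋖ z}, ((-1 : ℤ) ^ rho z) = (-1) ^ n := by
      intro z hz
      rw [(covBy_iff_rho isLowerSet_univ hgr (Set.mem_univ _) (Set.mem_univ _)
        hz.2.lt).mp hz.2, hx]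
    rw [finsum_mem_congr rfl hval, finsum_mem_const' (Set.toFinite _)]
  have hcount : ∀ x : α, rho x + 1 = n →
      (x ∈ I → {z | z ∈ Set.univ ∧ x ⋖ z}.ncard = 1) ∧
      (x ∉ I → {z | z ∈ Set.univ ∧ x ⋖ z}.ncard = 2) := by
    intro x hx
    have hsign : ((-1 : ℤ) ^ rho x) = -((-1 : ℤ) ^ n) := by
      rw [← hx, pow_succ]; ring
    have hpm : ((-1 : ℤ) ^ n) = 1 ∨ ((-1 : ℤ) ^ n) = -1 := by
      rcases Nat.even_or_odd n with he | ho
      · exact Or.inl he.neg_one_pow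
      · exact Or.inr ho.neg_one_pow
    constructor
    · intro hxI
      have h0 := (hc1 x hxI).2
      rw [hcov x hx, hsign] at h0
      have hc : (({z | z ∈ Set.univ ∧ x ⋖ z}.ncard : ℤ)) = 1 := by
        rcases hpm with hs | hs <;> rw [hs] at h0 <;> linarith
      exact_mod_cast hc
    · intro hxI
      have h0 := hc2 x hxI
      rw [hcov x hx, hsign] at h0
      have hc : (({z | z ∈ Set.univ ∧ x ⋖ z}.ncard : ℤ)) = 2 := by
        rcases hpm with hs | hs <;> rw [hs] at h0 <;> linarith
      exact_mod_cast hc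
  apply Set.Subset.antisymm
  · intro x hxI
    obtain ⟨t, ht, hxt⟩ := exists_maxChainIn I {x} (by simpa using hxI)
      (by simp [IsChain])
    have hxmem : x ∈ t := hxt (Finset.mem_singleton_self x)
    obtain ⟨m, hmt, hmmax⟩ := Finset.exists_maximal (s := t) ⟨x, hxmem⟩
    have hmub : ∀ w ∈ t, w ≤ m := by
      intro w hw
      rcases eq_or_ne w m with rfl | hne
      · exact le_rfl
      · rcases ht.2.1 (Finset.mem_coe.mpr hw) (Finset.mem_coe.mpr hmt) hne with h1 | h1
        · exact h1
        · exact hmmax hw h1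
    have hmI : m ∈ I := ht.1 hmt
    have hmax_el : ∀ z ∈ I, m ≤ z → z = m := by
      intro z hz hmz
      by_contra hne
      have hmz' : m < z := lt_of_le_of_ne hmz (Ne.symm hne)
      have hzt : z ∈ t := by
        have heq : t = insert z t := by
          refine ht.2.2 _ ?_ ?_ (Finset.subset_insert z t)
          · rw [Finset.coe_insert]
            exact Set.insert_subset hz ht.1
          · rw [Finset.coe_insert]
            exact ht.2.1.insert
              (fun w hw hnew => Or.inr ((hmub w hw).trans hmz'.le))
        rw [heq]
        exact Finset.mem_insert_self z t
      exact absurd (lt_of_lt_of_le hmz' (hmub z hzt)) (lt_irrefl m)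
    have hrm : rho m = n - 1 := (rho_eq_rank_iff hIlow hIgr hmI).mpr hmax_el
    have hrm' : rho m + 1 = n := by omega
    exact ⟨Set.mem_univ x, m, Set.mem_univ m, hrm, (hcount m hrm').1 hmI,
      hmub x hxmem⟩
  · rintro y ⟨-, x, -, hrx, hcnt, hyx⟩
    have hxI : x ∈ I := by
      by_contra hxI
      have h2 := (hcount x (by omega)).2 hxI
      rw [hcnt] at h2
      omega
    exact hIlow hyx hxI

end Boundary


/-- Near-Eulerian criterion for posets.  A lower Eulerian poset `P` of
rank `n` is near-Eulerian if and only if `n > 0` and there is a graded lower order ideal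
`I` of rank `n - 1` satisfying the alternating-sum conditions; moreover any such `I`
equals the boundary `∂P`. -/
theorem nearEulerian_criterion
    (α : Type) [PartialOrder α] [Finite α] [OrderBot α] (n : ℕ)
    (h : IsLowerEulerianOfRank α n) :
    (IsNearEulerianOfRank α n ↔ 0 < n ∧ ∃ I : Set α, NearEulerianCrit α n I) ∧
    (∀ I : Set α, 0 < n → NearEulerianCrit α n I → I = boundary α n) := by
  constructor
  · constructor
    · intro hne
      exact crit_of_isNearEulerian h hne
    · rintro ⟨hn, I, hcrit⟩
      exact isNearEulerian_of_crit h hn hcrit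
  · intro I hn hcrit
    exact crit_eq_boundary h hn hcrit

end CDIndex
end
end
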